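/- arXiv:0911.3389 — 2 statements merged into one kernel-verified Lean document; each statement's English description precedes it below -/
import Mathlib

section
/- There is a universal constant C > 0 such that for every n ≥ 1, every symmetric matrix A ∈ ℝ^{n×n}, every integer k ≥ 2, and x drawn uniformly at random from {−1,1}^n: E[|xᵀAx − tr(A)|^k] ≤ C^k · max{√k·‖A‖₂, k·λ_max(A)}^k. -/
open MeasureTheory

/-- Interpret a Boolean vector as a `±1` sign vector. -/
def signVec {n : ℕ} (x : Fin n → Bool) : Fin n → ℝ := fun i => if x i then 1 else -1

/-- Expectation of `f` under the uniform distribution on `{-1,1}^n`. -/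
noncomputable def expUnif (n : ℕ) (f : (Fin n → ℝ) → ℝ) : ℝ :=
  (∑ x : Fin n → Bool, f (signVec x)) / 2 ^ n

/-- The Frobenius norm of a real matrix. -/
noncomputable def frobNorm {n : ℕ} (A : Matrix (Fin n) (Fin n) ℝ) : ℝ :=
  Real.sqrt (∑ i, ∑ j, A i j ^ 2)

/-- `μ` is an eigenvalue of `A`. -/
def IsEigenvalue {n : ℕ} (A : Matrix (Fin n) (Fin n) ℝ) (μ : ℝ) : Prop :=
  ∃ v : Fin n → ℝ, v ≠ 0 ∧ A.mulVec v = μ • v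

/-- The largest absolute value of an eigenvalue of `A`. -/
noncomputable def lambdaMax {n : ℕ} (A : Matrix (Fin n) (Fin n) ℝ) : ℝ :=
  sSup {r : ℝ | ∃ μ : ℝ, IsEigenvalue A μ ∧ r = |μ|}

namespace HW

open Finset

variable {n : ℕ}

noncomputable def Ex (n : ℕ) (f : (Fin n → Bool) → ℝ) : ℝ :=
  (∑ x : Fin n → Bool, f x) / 2 ^ n

def ind (b : Bool) : ℝ := if b then 1 else 0

def Zoff (A : Matrix (Fin n) (Fin n) ℝ) (x : Fin n → Bool) : ℝ :=
  ∑ i, ∑ j, if i = j then 0 else A i j * signVec x i * signVec x j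

def Fsq (A : Matrix (Fin n) (Fin n) ℝ) : ℝ := ∑ i, ∑ j, (A i j) ^ 2

def OpB (A : Matrix (Fin n) (Fin n) ℝ) (M : ℝ) : Prop :=
  ∀ v : Fin n → ℝ, (∑ i, (∑ j, A i j * v j) ^ 2) ≤ M ^ 2 * ∑ i, (v i) ^ 2

def g : ℕ → ℕ
  | 0 => 1
  | m + 1 => (2 * m + 1) * g m

lemma Ex_nonneg {f : (Fin n → Bool) → ℝ} (h : ∀ x, 0 ≤ f x) : 0 ≤ Ex n f := by
  apply div_nonneg (Finset.sum_nonneg fun x _ => h x) (by positivity)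

lemma Ex_mono {f h : (Fin n → Bool) → ℝ} (hle : ∀ x, f x ≤ h x) : Ex n f ≤ Ex n h := by
  apply div_le_div_of_nonneg_right ?_ (by positivity) |>.trans_eq rfl
  · exact Finset.sum_le_sum fun x _ => hle x

lemma Ex_const (c : ℝ) : Ex n (fun _ => c) = c := by
  simp only [Ex, Finset.sum_const, Finset.card_univ, nsmul_eq_mul]
  rw [Fintype.card_fun, Fintype.card_bool, Fintype.card_fin, mul_comm,
    mul_div_assoc, Nat.cast_pow, Nat.cast_ofNat, div_self (by positivity), mul_one]

lemma Ex_add {f h : (Fin n → Bool) → ℝ} : Ex n (fun x => f x + h x) = Ex n f + Ex n h := by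
  simp [Ex, Finset.sum_add_distrib, add_div]

lemma Ex_smul (c : ℝ) {f : (Fin n → Bool) → ℝ} : Ex n (fun x => c * f x) = c * Ex n f := by
  simp [Ex, ← Finset.mul_sum, mul_div_assoc]

lemma sq_signVec (x : Fin n → Bool) (i : Fin n) : signVec x i ^ 2 = 1 := by
  simp only [signVec]; rcases x i <;> norm_num

lemma signVec_pow_even (x : Fin n → Bool) (i : Fin n) (t : ℕ) : signVec x i ^ (2 * t) = 1 := by
  rw [pow_mul, sq_signVec, one_pow]

lemma sum_mul_signVec_eq_zero (j : Fin n) (f : (Fin n → Bool) → ℝ)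
    (hf : ∀ x b, f (Function.update x j b) = f x) :
    ∑ x : Fin n → Bool, f x * signVec x j = 0 := by
  have hinv : Function.Involutive (fun x : Fin n → Bool => Function.update x j (!(x j))) := by
    intro x; funext i
    by_cases h : i = j
    · subst h; simp
    · simp [Function.update_of_ne h]
  let e := hinv.toPerm
  have h1 : ∑ x : Fin n → Bool, f x * signVec x j
      = ∑ x : Fin n → Bool, f (e x) * signVec (e x) j := (Equiv.sum_comp e _).symm
  have h2 : ∀ x, f (e x) * signVec (e x) j = - (f x * signVec x j) := by
    intro x
    have hfe : f (e x) = f x := hf x _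
    have hsg : signVec (e x) j = - signVec x j := by
      show signVec (Function.update x j (!(x j))) j = - signVec x j
      simp only [signVec, Function.update_self]
      rcases x j <;> norm_num
    rw [hfe, hsg]; ring
  have h3 : ∑ x : Fin n → Bool, f x * signVec x j
      = - ∑ x : Fin n → Bool, f x * signVec x j := by
    nth_rewrite 1 [h1]
    rw [Finset.sum_congr rfl fun x _ => h2 x, Finset.sum_neg_distrib]
  linarith

lemma g_fact (m : ℕ) : g m * 2 ^ m * m.factorial = (2 * m).factorial := by
  induction m with
  | zero => simp [g]
  | succ m ih =>
    have h2 : 2 * (m + 1) = (2 * m + 1) + 1 := by ring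
    rw [h2, Nat.factorial_succ, Nat.factorial_succ]
    calc g (m+1) * 2 ^ (m+1) * ((m+1) * m.factorial)
        = (2*m+1) * ((2*m+1)+1) * (g m * 2 ^ m * m.factorial) := by rw [g]; ring
      _ = (2*m+1+1) * ((2*m+1) * (2*m).factorial) := by rw [ih]; ring
      _ = (2*m+1+1) * (2*m+1).factorial := by rw [Nat.factorial_succ]

lemma two_pow_fact (i : ℕ) : 2 ^ i * i.factorial ≤ (2 * i).factorial := by
  induction i with
  | zero => simp
  | succ i ih =>
    have h2 : 2 * (i + 1) = (2 * i + 1) + 1 := by ring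
    rw [h2, Nat.factorial_succ, Nat.factorial_succ, Nat.factorial_succ]
    calc 2 ^ (i+1) * ((i+1) * i.factorial) = (2*(i+1)) * (2 ^ i * i.factorial) := by ring
      _ ≤ (2*(i+1)) * (2*i).factorial := Nat.mul_le_mul_left _ ih
      _ ≤ ((2*i+1+1) * ((2*i+1) * (2*i).factorial)) := by
          have : 2*(i+1) ≤ (2*i+1+1)*(2*i+1) := by nlinarith
          calc (2*(i+1)) * (2*i).factorial ≤ ((2*i+1+1)*(2*i+1)) * (2*i).factorial :=
                Nat.mul_le_mul_right _ this
            _ = (2*i+1+1) * ((2*i+1) * (2*i).factorial) := by ring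

lemma g_real (m : ℕ) : (g m : ℝ) = (2*m).factorial / (2 ^ m * m.factorial) := by
  have h := g_fact m
  have h2 : ((g m * 2 ^ m * m.factorial : ℕ) : ℝ) = ((2*m).factorial : ℕ) :=
    congrArg (Nat.cast : ℕ → ℝ) h
  push_cast at h2
  field_simp
  linarith [h2]

lemma choose_g {m i : ℕ} (hi : i ≤ m) :
    ((2*m).choose (2*i) : ℝ) * g (m - i) ≤ (g m : ℝ) * (m.choose i) := by
  have h1 : 2*m - 2*i = 2*(m-i) := by omega
  rw [Nat.cast_choose ℝ (by omega : 2*i ≤ 2*m), Nat.cast_choose ℝ hi, g_real, g_real, h1]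
  have key0 : ((2:ℕ)^i * i.factorial : ℕ) ≤ ((2*i).factorial : ℕ) := two_pow_fact i
  have key : (2:ℝ)^i * (i.factorial : ℝ) ≤ ((2*i).factorial : ℝ) := by exact_mod_cast key0
  set a := ((2*m).factorial : ℝ) with ha
  set b := ((2*i).factorial : ℝ)
  set c := ((m-i).factorial : ℝ)
  set d := (i.factorial : ℝ)
  set e := (m.factorial : ℝ)
  set f := ((2*(m-i)).factorial : ℝ)
  have hb : (0:ℝ) < b := by positivity
  have hc : (0:ℝ) < c := by positivity
  have hd : (0:ℝ) < d := by positivity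
  have he : (0:ℝ) < e := by positivity
  have hf : (0:ℝ) < f := by positivity
  have ha' : (0:ℝ) ≤ a := by positivity
  have h2m : (2:ℝ)^m = 2^i * 2^(m-i) := by rw [← pow_add]; congr 1; omega
  rw [div_mul_div_comm, div_mul_div_comm, div_le_div_iff₀ (by positivity) (by positivity), h2m]
  calc a * f * (2 ^ i * 2 ^ (m - i) * e * (d * c))
      = (a * f * 2^(m-i) * c * e) * (2^i * d) := by ring
    _ ≤ (a * f * 2^(m-i) * c * e) * b := by
        apply mul_le_mul_of_nonneg_left key (by positivity)
    _ = a * e * (b * f * (2 ^ (m - i) * c)) := by ring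

theorem khintchine (a : Fin n → ℝ) (s : Finset (Fin n)) (m : ℕ) :
    (∑ x : Fin n → Bool, (∑ i ∈ s, a i * signVec x i) ^ (2 * m))
      ≤ (g m : ℝ) * (∑ i ∈ s, (a i) ^ 2) ^ m * 2 ^ n := by
  induction s using Finset.cons_induction generalizing m with
  | empty =>
    rcases m with _ | m
    · simp [g]
    · simp only [Finset.sum_empty]
      rw [zero_pow (by omega), zero_pow (by omega)]
      have : (∑ _x : Fin n → Bool, (0:ℝ)) = 0 := by simp
      rw [this]
      positivity
  | cons j s' hj ih =>
    set S' : (Fin n → Bool) → ℝ := fun x => ∑ i ∈ s', a i * signVec x i with hS'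
    have hS'inv : ∀ (x : Fin n → Bool) (b : Bool) (p : ℕ), (S' (Function.update x j b)) ^ p = (S' x) ^ p := by
      intro x b p
      congr 1
      apply Finset.sum_congr rfl
      intro i hi
      have hij : i ≠ j := fun h => hj (h ▸ hi)
      simp [signVec, Function.update_of_ne hij]
    -- expand
    have expand : ∀ x : Fin n → Bool,
        (∑ i ∈ Finset.cons j s' hj, a i * signVec x i) ^ (2*m)
        = ∑ l ∈ Finset.range (2*m+1),
            (a j)^l * ((signVec x j)^l * (S' x)^(2*m-l)) * ((2*m).choose l) := by
      intro x
      rw [Finset.sum_cons, add_pow]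
      apply Finset.sum_congr rfl
      intro l _
      rw [mul_pow]
      ring
    rw [Finset.sum_congr rfl fun x _ => expand x, Finset.sum_comm]
    have inner_eq : ∀ l ∈ Finset.range (2*m+1),
        (∑ x : Fin n → Bool, (a j)^l * ((signVec x j)^l * (S' x)^(2*m-l)) * ((2*m).choose l))
        = (a j)^l * ((2*m).choose l) *
            (if Even l then (∑ x : Fin n → Bool, (S' x)^(2*m-l)) else 0) := by
      intro l _
      rw [← Finset.sum_mul, ← Finset.mul_sum]
      by_cases hl : Even l
      · rw [if_pos hl]
        obtain ⟨t, ht⟩ := hl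
        have : ∀ x : Fin n → Bool, (signVec x j)^l * (S' x)^(2*m-l) = (S' x)^(2*m-l) := by
          intro x
          rw [show l = 2*t by omega, signVec_pow_even, one_mul]
        rw [Finset.sum_congr rfl fun x _ => this x]
        ring
      · rw [if_neg hl]
        obtain ⟨t, ht⟩ := Nat.not_even_iff_odd.mp hl
        have : ∀ x : Fin n → Bool, (signVec x j)^l * (S' x)^(2*m-l)
            = ((S' x)^(2*m-l)) * signVec x j := by
          intro x
          rw [ht, pow_add, pow_mul, sq_signVec, one_pow, pow_one, one_mul, mul_comm]
        rw [Finset.sum_congr rfl fun x _ => this x]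
        rw [sum_mul_signVec_eq_zero j _ (fun x b => hS'inv x b _)]
        ring
    rw [Finset.sum_congr rfl inner_eq]
    -- drop odd terms : sum over filter
    rw [← Finset.sum_filter_add_sum_filter_not (Finset.range (2*m+1)) Even]
    have hodd : ∑ l ∈ (Finset.range (2*m+1)).filter (fun l => ¬ Even l),
        (a j)^l * ((2*m).choose l) * (if Even l then (∑ x : Fin n → Bool, (S' x)^(2*m-l)) else 0) = 0 := by
      apply Finset.sum_eq_zero
      intro l hl
      rw [Finset.mem_filter] at hl
      rw [if_neg hl.2, mul_zero]
    rw [hodd, add_zero]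
    -- reindex even terms by l = 2t
    have reindex : ∑ l ∈ (Finset.range (2*m+1)).filter Even,
        (a j)^l * ((2*m).choose l) * (if Even l then (∑ x : Fin n → Bool, (S' x)^(2*m-l)) else 0)
        = ∑ t ∈ Finset.range (m+1),
            (a j)^(2*t) * ((2*m).choose (2*t)) * (∑ x : Fin n → Bool, (S' x)^(2*(m-t))) := by
      apply Finset.sum_nbij' (i := fun l => l / 2) (j := fun t => 2 * t)
      · intro l hl
        simp only [Finset.mem_filter, Finset.mem_range] at hl ⊢
        omega
      · intro t ht
        simp only [Finset.mem_filter, Finset.mem_range] at ht ⊢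
        exact ⟨by omega, ⟨t, by omega⟩⟩
      · intro l hl
        simp only [Finset.mem_filter, Finset.mem_range] at hl
        obtain ⟨_, t, ht⟩ := hl
        omega
      · intro t _
        omega
      · intro l hl
        simp only [Finset.mem_filter, Finset.mem_range] at hl
        obtain ⟨hl1, t, ht⟩ := hl
        rw [if_pos ⟨t, ht⟩]
        have h1 : 2 * (l / 2) = l := by omega
        have h2 : 2 * (m - l/2) = 2*m - l := by omega
        rw [h1, h2]
    rw [reindex]
    -- apply IH to each term
    have step1 : ∑ t ∈ Finset.range (m+1),
        (a j)^(2*t) * ((2*m).choose (2*t)) * (∑ x : Fin n → Bool, (S' x)^(2*(m-t)))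
        ≤ ∑ t ∈ Finset.range (m+1),
        (a j)^(2*t) * ((2*m).choose (2*t)) * ((g (m-t) : ℝ) * (∑ i ∈ s', (a i)^2)^(m-t) * 2^n) := by
      apply Finset.sum_le_sum
      intro t _
      have hnn0 : (0:ℝ) ≤ (a j)^(2*t) := by rw [pow_mul]; positivity
      apply mul_le_mul_of_nonneg_left (ih (m-t)) (by positivity)
    refine step1.trans ?_
    -- apply choose_g
    have step2 : ∀ t ∈ Finset.range (m+1),
        (a j)^(2*t) * ((2*m).choose (2*t)) * ((g (m-t) : ℝ) * (∑ i ∈ s', (a i)^2)^(m-t) * 2^n)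
        ≤ (g m : ℝ) * 2^n * ((m.choose t) * ((a j)^2)^t * (∑ i ∈ s', (a i)^2)^(m-t)) := by
      intro t ht
      rw [Finset.mem_range] at ht
      have hcg := choose_g (show t ≤ m by omega)
      have hnn0 : (0:ℝ) ≤ (a j)^(2*t) := by rw [pow_mul]; positivity
      have hnn : (0:ℝ) ≤ (a j)^(2*t) * (∑ i ∈ s', (a i)^2)^(m-t) * 2^n := by positivity
      calc (a j)^(2*t) * ((2*m).choose (2*t)) * ((g (m-t) : ℝ) * (∑ i ∈ s', (a i)^2)^(m-t) * 2^n)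
          = ((a j)^(2*t) * (∑ i ∈ s', (a i)^2)^(m-t) * 2^n) * (((2*m).choose (2*t) : ℝ) * g (m-t)) := by
            ring
        _ ≤ ((a j)^(2*t) * (∑ i ∈ s', (a i)^2)^(m-t) * 2^n) * ((g m : ℝ) * (m.choose t)) :=
            mul_le_mul_of_nonneg_left hcg hnn
        _ = (g m : ℝ) * 2^n * ((m.choose t) * ((a j)^2)^t * (∑ i ∈ s', (a i)^2)^(m-t)) := by
            rw [← pow_mul]
            ring
    refine (Finset.sum_le_sum step2).trans ?_
    rw [← Finset.mul_sum]
    have hbinom : ∑ t ∈ Finset.range (m+1),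
        ((m.choose t : ℝ)) * ((a j)^2)^t * (∑ i ∈ s', (a i)^2)^(m-t)
        = ((a j)^2 + ∑ i ∈ s', (a i)^2)^m := by
      rw [add_pow]
      apply Finset.sum_congr rfl
      intro t _
      ring
    rw [hbinom, Finset.sum_cons]
    apply le_of_eq
    ring

lemma quadform_eq (A : Matrix (Fin n) (Fin n) ℝ) (x : Fin n → Bool) :
    dotProduct (signVec x) (A.mulVec (signVec x)) - A.trace = Zoff A x := by
  simp only [dotProduct, Matrix.mulVec, Matrix.trace, Matrix.diag, Zoff]
  rw [← Finset.sum_sub_distrib]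
  refine Finset.sum_congr rfl fun i _ => ?_
  rw [Finset.mul_sum]
  have h1 : ∀ j : Fin n, signVec x i * (A i j * signVec x j)
      = (if i = j then 0 else A i j * signVec x i * signVec x j) + (if i = j then A i j else 0) := by
    intro j
    by_cases h : i = j
    · subst h
      have := sq_signVec x i
      simp only [if_pos rfl]
      calc signVec x i * (A i i * signVec x i) = A i i * signVec x i ^ 2 := by ring
      _ = 0 + A i i := by rw [this]; ring
    · simp only [if_neg h]; ring
  simp only [h1, Finset.sum_add_distrib, Finset.sum_ite_eq, Finset.mem_univ, if_pos]
  ring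


lemma g_le (m : ℕ) : (g m : ℝ) ≤ (2 * (m:ℝ)) ^ m := by
  induction m with
  | zero => simp [g]
  | succ m ih =>
    have h1 : (2 * (m:ℝ)) ^ m ≤ (2 * ((m:ℝ)+1)) ^ m := by
      apply pow_le_pow_left₀ (by positivity) (by linarith)
    have h2 : (g (m+1) : ℝ) = (2*(m:ℝ) + 1) * g m := by rw [g]; push_cast; ring
    rw [h2]
    calc (2*(m:ℝ)+1) * g m ≤ (2 * ((m:ℝ)+1)) * (2*((m:ℝ)+1)) ^ m := by
          apply mul_le_mul (by linarith) (ih.trans h1) (Nat.cast_nonneg _) (by positivity)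
    _ = (2 * ((m:ℝ)+1)) ^ (m+1) := by ring
    _ = (2 * ((m+1:ℕ):ℝ)) ^ (m+1) := by push_cast; ring

lemma card_cube : (Fintype.card (Fin n → Bool) : ℝ) = 2 ^ n := by
  rw [Fintype.card_fun, Fintype.card_bool, Fintype.card_fin]
  push_cast
  ring

lemma Ex_comm (F : (Fin n → Bool) → (Fin n → Bool) → ℝ) :
    Ex n (fun x => Ex n (fun δ => F x δ)) = Ex n (fun δ => Ex n (fun x => F x δ)) := by
  unfold Ex
  rw [← Finset.sum_div, ← Finset.sum_div, Finset.sum_comm]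

lemma abs_Ex_le (f : (Fin n → Bool) → ℝ) : |Ex n f| ≤ Ex n (fun x => |f x|) := by
  unfold Ex
  rw [abs_div, abs_of_nonneg (by positivity : (0:ℝ) ≤ 2^n)]
  exact div_le_div_of_nonneg_right (Finset.abs_sum_le_sum_abs _ _) (by positivity) |>.trans_eq rfl

lemma Ex_pow_le (f : (Fin n → Bool) → ℝ) (k : ℕ) (hk : 1 ≤ k) :
    (Ex n f) ^ k ≤ Ex n (fun δ => |f δ| ^ k) := by
  have h1 : (Ex n f)^k ≤ |Ex n f|^k := by
    calc (Ex n f)^k ≤ |(Ex n f)^k| := le_abs_self _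
    _ = |Ex n f|^k := abs_pow _ _
  refine h1.trans ?_
  have h2 : |Ex n f|^k ≤ (Ex n (fun x => |f x|))^k :=
    pow_le_pow_left₀ (abs_nonneg _) (abs_Ex_le f) k
  refine h2.trans ?_
  obtain ⟨k', rfl⟩ : ∃ k', k = k' + 1 := ⟨k - 1, by omega⟩
  have h3 := pow_sum_div_card_le_sum_pow (s := (Finset.univ : Finset (Fin n → Bool)))
    (f := fun x => |f x|) (fun i _ => abs_nonneg _) k'
  rw [Finset.card_univ] at h3
  unfold Ex
  rw [div_pow]
  rw [show ((2:ℝ)^n)^(k'+1) = ((2:ℝ)^n)^k' * 2^n by ring]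
  rw [← div_div]
  apply div_le_div_of_nonneg_right ?_ (by positivity) |>.trans_eq rfl
  calc (∑ x : Fin n → Bool, |f x|)^(k'+1) / ((2:ℝ)^n)^k'
      = (∑ x : Fin n → Bool, |f x|)^(k'+1) / ((Fintype.card (Fin n → Bool) : ℝ))^k' := by
        rw [card_cube]
    _ ≤ ∑ x : Fin n → Bool, |f x|^(k'+1) := by exact_mod_cast h3
    _ = ∑ x : Fin n → Bool, |f x|^(k'+1) := rfl

/-- combine two boolean vectors according to a mask -/
def cmb (δ x y : Fin n → Bool) : Fin n → Bool := fun i => if δ i then x i else y i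

def Sd (A : Matrix (Fin n) (Fin n) ℝ) (δ x : Fin n → Bool) : ℝ :=
  ∑ i, ∑ j, ind (δ i) * ind (!(δ j)) * A i j * signVec x i * signVec x j

def Td (A : Matrix (Fin n) (Fin n) ℝ) (δ x y : Fin n → Bool) : ℝ :=
  ∑ i, ∑ j, ind (δ i) * ind (!(δ j)) * A i j * signVec x i * signVec y j

lemma count_pair {i j : Fin n} (hij : i ≠ j) :
    ∑ δ : Fin n → Bool, ind (δ i) * ind (!(δ j)) = 2 ^ n / 4 := by
  classical
  set p : Fin n → Bool → ℝ :=
    fun l b => if l = i then ind b else if l = j then ind (!b) else 1 with hp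
  have h1 : ∀ δ : Fin n → Bool, ind (δ i) * ind (!(δ j)) = ∏ l, p l (δ l) := by
    intro δ
    have hji : j ≠ i := hij.symm
    rw [← Finset.mul_prod_erase Finset.univ _ (Finset.mem_univ i),
        ← Finset.mul_prod_erase _ _ (Finset.mem_erase.mpr ⟨hji, Finset.mem_univ j⟩)]
    have hpi : p i (δ i) = ind (δ i) := by simp [hp]
    have hpj : p j (δ j) = ind (!(δ j)) := by simp [hp, hji]
    have hrest : ∏ l ∈ (Finset.univ.erase i).erase j, p l (δ l) = 1 := by
      apply Finset.prod_eq_one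
      intro l hl
      rw [Finset.mem_erase, Finset.mem_erase] at hl
      simp [hp, hl.1, hl.2.1]
    rw [hpi, hpj, hrest]
    ring
  rw [Finset.sum_congr rfl fun δ _ => h1 δ]
  have h2 : ∑ δ : Fin n → Bool, ∏ l, p l (δ l) = ∏ l, ∑ b : Bool, p l b := by
    rw [Finset.prod_univ_sum]
    rw [Fintype.piFinset_univ]
  rw [h2]
  have h3 : ∀ l, ∑ b : Bool, p l b = if l = i then 1 else if l = j then 1 else 2 := by
    intro l
    rw [Fintype.sum_bool]
    by_cases h : l = i
    · simp [hp, h, ind]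
    · by_cases h' : l = j <;> · simp [hp, h, h', ind, hij.symm]; try norm_num
  rw [Finset.prod_congr rfl fun l _ => h3 l]
  have hji : j ≠ i := hij.symm
  rw [← Finset.mul_prod_erase Finset.univ _ (Finset.mem_univ i),
      ← Finset.mul_prod_erase _ _ (Finset.mem_erase.mpr ⟨hji, Finset.mem_univ j⟩)]
  rw [if_pos rfl, if_neg hji, if_pos rfl]
  have hrest : ∏ l ∈ (Finset.univ.erase i).erase j,
      (if l = i then (1:ℝ) else if l = j then 1 else 2) = 2 ^ (n - 2) := by
    rw [Finset.prod_congr rfl (fun l hl => ?_), Finset.prod_const]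
    · congr 1
      rw [Finset.card_erase_of_mem (Finset.mem_erase.mpr ⟨hji, Finset.mem_univ j⟩),
          Finset.card_erase_of_mem (Finset.mem_univ i), Finset.card_univ, Fintype.card_fin]
      omega
    · rw [Finset.mem_erase, Finset.mem_erase] at hl
      simp [hl.1, hl.2.1]
  rw [hrest]
  have hn2 : 2 ≤ n := by
    have h1 : i.val ≠ j.val := fun h => hij (Fin.ext h)
    have := i.isLt
    have := j.isLt
    omega
  rw [eq_div_iff (by norm_num : (4:ℝ) ≠ 0)]
  calc (1:ℝ) * (1 * 2^(n-2)) * 4 = 2^(n-2) * 2^2 := by ring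
    _ = 2^(n-2+2) := by rw [pow_add]
    _ = 2^n := by congr 1; omega

lemma Zoff_eq_avg (A : Matrix (Fin n) (Fin n) ℝ) (x : Fin n → Bool) :
    Zoff A x = 4 * Ex n (fun δ => Sd A δ x) := by
  have key : ∑ δ : Fin n → Bool, Sd A δ x
      = ∑ i, ∑ j, (A i j * signVec x i * signVec x j)
          * (∑ δ : Fin n → Bool, ind (δ i) * ind (!(δ j))) := by
    unfold Sd
    rw [Finset.sum_comm]
    refine Finset.sum_congr rfl fun i _ => ?_
    rw [Finset.sum_comm]
    refine Finset.sum_congr rfl fun j _ => ?_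
    rw [Finset.mul_sum]
    exact Finset.sum_congr rfl fun δ _ => by ring
  have key2 : ∀ i j : Fin n, (A i j * signVec x i * signVec x j)
      * (∑ δ : Fin n → Bool, ind (δ i) * ind (!(δ j)))
      = (if i = j then 0 else A i j * signVec x i * signVec x j) * (2^n/4) := by
    intro i j
    by_cases h : i = j
    · subst h
      have : ∑ δ : Fin n → Bool, ind (δ i) * ind (!(δ i)) = 0 := by
        apply Finset.sum_eq_zero
        intro δ _
        rcases hd : δ i <;> simp [ind, hd]
      rw [this, if_pos rfl, mul_zero, zero_mul]
    · rw [count_pair h, if_neg h]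
  have key3 : ∑ δ : Fin n → Bool, Sd A δ x = Zoff A x * (2^n/4) := by
    rw [key, Finset.sum_congr rfl (fun i (_ : i ∈ Finset.univ) =>
      Finset.sum_congr rfl fun j _ => key2 i j)]
    unfold Zoff
    rw [Finset.sum_mul]
    exact Finset.sum_congr rfl fun i _ => by rw [Finset.sum_mul]
  unfold Ex
  rw [key3]
  field_simp

lemma Sd_cmb (A : Matrix (Fin n) (Fin n) ℝ) (δ x y : Fin n → Bool) :
    Sd A δ (cmb δ x y) = Td A δ x y := by
  unfold Sd Td
  refine Finset.sum_congr rfl fun i _ => Finset.sum_congr rfl fun j _ => ?_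
  rcases hi : δ i <;> rcases hj : δ j <;> simp [ind, cmb, signVec, hi, hj]

lemma Td_cmb (A : Matrix (Fin n) (Fin n) ℝ) (δ x y : Fin n → Bool) :
    Td A δ (cmb δ x y) (cmb δ y x) = Sd A δ x := by
  unfold Sd Td
  refine Finset.sum_congr rfl fun i _ => Finset.sum_congr rfl fun j _ => ?_
  rcases hi : δ i <;> rcases hj : δ j <;> simp [ind, cmb, signVec, hi, hj]

lemma cmb_invol (δ : Fin n → Bool) :
    Function.Involutive (fun p : (Fin n → Bool) × (Fin n → Bool) =>
      (cmb δ p.1 p.2, cmb δ p.2 p.1)) := by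
  intro p
  ext i <;> · simp only [cmb]; rcases h : δ i <;> simp [h]

lemma Ex_Sd_pow (A : Matrix (Fin n) (Fin n) ℝ) (δ : Fin n → Bool) (k : ℕ) :
    Ex n (fun x => (Sd A δ x) ^ k) = Ex n (fun x => Ex n (fun y => (Td A δ x y) ^ k)) := by
  have key : (∑ x : Fin n → Bool, (Sd A δ x)^k) * 2^n
      = ∑ x : Fin n → Bool, ∑ y : Fin n → Bool, (Td A δ x y)^k := by
    rw [← Fintype.sum_prod_type']
    have h1 : ∑ p : (Fin n → Bool) × (Fin n → Bool), (Td A δ p.1 p.2)^k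
        = ∑ p : (Fin n → Bool) × (Fin n → Bool), (Td A δ (cmb δ p.1 p.2) (cmb δ p.2 p.1))^k :=
      (Equiv.sum_comp (Function.Involutive.toPerm _ (cmb_invol δ))
        (fun p : (Fin n → Bool) × (Fin n → Bool) => (Td A δ p.1 p.2)^k)).symm
    rw [h1]
    have h2 : ∀ p : (Fin n → Bool) × (Fin n → Bool),
        (Td A δ (cmb δ p.1 p.2) (cmb δ p.2 p.1))^k = (Sd A δ p.1)^k := by
      intro p
      rw [Td_cmb]
    rw [Finset.sum_congr rfl fun p _ => h2 p]
    rw [Fintype.sum_prod_type]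
    rw [Finset.sum_mul]
    refine Finset.sum_congr rfl fun x _ => ?_
    simp only [Finset.sum_const, Finset.card_univ, nsmul_eq_mul]
    rw [show ((Fintype.card (Fin n → Bool) : ℝ)) = 2^n from card_cube]
    ring
  unfold Ex
  rw [← Finset.sum_div, div_div, ← key]
  rw [mul_comm ((2:ℝ)^n) (2^n)]
  rw [mul_div_mul_right _ _ (by positivity : ((2:ℝ)^n) ≠ 0)]

def Bm (A : Matrix (Fin n) (Fin n) ℝ) (δ : Fin n → Bool) : Matrix (Fin n) (Fin n) ℝ :=
  fun i i' => ind (δ i) * ind (δ i') * ∑ j, A i j * A i' j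

def cvec (A : Matrix (Fin n) (Fin n) ℝ) (δ x : Fin n → Bool) : Fin n → ℝ :=
  fun j => ind (!(δ j)) * ∑ i, ind (δ i) * A i j * signVec x i

lemma ind_sq_le_one (b : Bool) : ind b ^ 2 ≤ 1 := by rcases b <;> simp [ind]

lemma Td_eq (A : Matrix (Fin n) (Fin n) ℝ) (δ x y : Fin n → Bool) :
    Td A δ x y = ∑ j, cvec A δ x j * signVec y j := by
  unfold Td cvec
  rw [Finset.sum_comm]
  refine Finset.sum_congr rfl fun j _ => ?_
  rw [Finset.mul_sum, Finset.sum_mul]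
  exact Finset.sum_congr rfl fun i _ => by ring

lemma hsymm_entries {A : Matrix (Fin n) (Fin n) ℝ} (hA : A.IsSymm) :
    ∀ i j, A i j = A j i := by
  intro i j
  conv_rhs => rw [← hA]
  rfl

lemma csum_le (A : Matrix (Fin n) (Fin n) ℝ) (δ x : Fin n → Bool) :
    ∑ j, (cvec A δ x j) ^ 2 ≤ Fsq A + |Zoff (Bm A δ) x| := by
  set u : Fin n → ℝ := fun i => ind (δ i) * signVec x i with hu
  have hu2 : ∀ i, (u i) ^ 2 ≤ 1 := by
    intro i
    have : (u i)^2 = ind (δ i)^2 := by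
      rw [hu]; simp only []; rw [mul_pow, sq_signVec, mul_one]
    rw [this]; exact ind_sq_le_one _
  have step1 : ∀ j, (cvec A δ x j) ^ 2 ≤ (∑ i, A i j * u i) ^ 2 := by
    intro j
    unfold cvec
    rw [mul_pow]
    have h1 : (∑ i, ind (δ i) * A i j * signVec x i) = ∑ i, A i j * u i := by
      refine Finset.sum_congr rfl fun i _ => ?_
      rw [hu]; ring
    rw [h1]
    have h2 := ind_sq_le_one (!(δ j))
    nlinarith [sq_nonneg (∑ i, A i j * u i)]
  refine (Finset.sum_le_sum fun j _ => step1 j).trans ?_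
  have step2 : ∑ j, (∑ i, A i j * u i) ^ 2
      = ∑ i, ∑ i', (∑ j, A i j * A i' j) * (u i * u i') := by
    have h1 : ∀ j : Fin n, (∑ i, A i j * u i) ^ 2
        = ∑ i, ∑ i', (A i j * u i) * (A i' j * u i') := by
      intro j
      rw [sq, Finset.sum_mul_sum]
    rw [Finset.sum_congr rfl fun j _ => h1 j, Finset.sum_comm]
    refine Finset.sum_congr rfl fun i _ => ?_
    rw [Finset.sum_comm]
    refine Finset.sum_congr rfl fun i' _ => ?_
    rw [Finset.sum_mul]
    exact Finset.sum_congr rfl fun j _ => by ring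
  rw [step2]
  have split : ∀ i : Fin n, ∑ i', (∑ j, A i j * A i' j) * (u i * u i')
      = (∑ j, A i j * A i j) * (u i * u i)
        + ∑ i', (if i = i' then 0 else (∑ j, A i j * A i' j) * (u i * u i')) := by
    intro i
    rw [← Finset.add_sum_erase _ _ (Finset.mem_univ i)]
    congr 1
    have h2 : ∑ i', (if i = i' then (0:ℝ) else (∑ j, A i j * A i' j) * (u i * u i'))
        = ∑ i' ∈ Finset.univ.erase i, (∑ j, A i j * A i' j) * (u i * u i') := by
      rw [← Finset.add_sum_erase _
        (fun i' => if i = i' then (0:ℝ) else (∑ j, A i j * A i' j) * (u i * u i'))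
        (Finset.mem_univ i), if_pos rfl, zero_add]
      exact Finset.sum_congr rfl fun i' hi' =>
        if_neg (fun h => ((Finset.mem_erase.mp hi').1 h.symm))
    exact h2.symm
  rw [Finset.sum_congr rfl fun i _ => split i, Finset.sum_add_distrib]
  have diag_le : ∑ i, (∑ j, A i j * A i j) * (u i * u i) ≤ Fsq A := by
    unfold Fsq
    refine Finset.sum_le_sum fun i _ => ?_
    have h1 : (∑ j, A i j * A i j) = ∑ j, (A i j)^2 :=
      Finset.sum_congr rfl fun j _ => (sq (A i j)).symm
    rw [h1]
    have h2 : u i * u i = (u i)^2 := (sq (u i)).symm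
    rw [h2]
    have h3 : (0:ℝ) ≤ ∑ j, (A i j)^2 := by positivity
    exact mul_le_of_le_one_right h3 (hu2 i)
  have offdiag_eq : ∑ i, ∑ i', (if i = i' then 0 else (∑ j, A i j * A i' j) * (u i * u i'))
      = Zoff (Bm A δ) x := by
    unfold Zoff Bm
    refine Finset.sum_congr rfl fun i _ => Finset.sum_congr rfl fun i' _ => ?_
    by_cases h : i = i'
    · rw [if_pos h, if_pos h]
    · rw [if_neg h, if_neg h, hu]
      ring
  rw [offdiag_eq]
  exact add_le_add diag_le (le_abs_self _)

lemma Bm_symm (A : Matrix (Fin n) (Fin n) ℝ) (δ : Fin n → Bool) : (Bm A δ).IsSymm := by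
  apply Matrix.ext
  intro i j
  unfold Bm
  show ind (δ j) * ind (δ i) * ∑ l, A j l * A i l = _
  rw [Finset.sum_congr rfl fun l (_ : l ∈ Finset.univ) => mul_comm (A j l) (A i l)]
  ring

lemma Fsq_Bm {A : Matrix (Fin n) (Fin n) ℝ} {M : ℝ} (hM : OpB A M) (δ : Fin n → Bool) :
    Fsq (Bm A δ) ≤ M ^ 2 * Fsq A := by
  unfold Fsq Bm
  have step1 : ∀ i i' : Fin n, (ind (δ i) * ind (δ i') * ∑ j, A i j * A i' j) ^ 2
      ≤ (∑ j, A i j * A i' j) ^ 2 := by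
    intro i i'
    rw [mul_pow, mul_pow]
    have h1 := ind_sq_le_one (δ i)
    have h2 := ind_sq_le_one (δ i')
    have hab : ind (δ i)^2 * ind (δ i')^2 ≤ 1 := by nlinarith [sq_nonneg (ind (δ i)), sq_nonneg (ind (δ i'))]
    exact mul_le_of_le_one_left (sq_nonneg _) hab
  refine (Finset.sum_le_sum fun i _ => Finset.sum_le_sum fun i' _ => step1 i i').trans ?_
  rw [Finset.sum_comm, Finset.mul_sum]
  refine Finset.sum_le_sum fun i' _ => ?_
  have := hM (fun j => A i' j)
  exact this

lemma OpB_Bm {A : Matrix (Fin n) (Fin n) ℝ} {M : ℝ} (hA : A.IsSymm) (hM : OpB A M)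
    (δ : Fin n → Bool) : OpB (Bm A δ) (M ^ 2) := by
  intro v
  set w : Fin n → ℝ := fun i' => ind (δ i') * v i' with hw
  set z : Fin n → ℝ := fun j => ∑ i', A j i' * w i' with hz
  have hrow : ∀ i, (∑ i', Bm A δ i i' * v i') = ind (δ i) * ∑ j, A i j * z j := by
    intro i
    unfold Bm
    have h1 : ∀ i', (ind (δ i) * ind (δ i') * ∑ j, A i j * A i' j) * v i'
        = ind (δ i) * ((∑ j, A i j * A i' j) * w i') := by
      intro i'
      rw [hw]; ring
    rw [Finset.sum_congr rfl fun i' _ => h1 i', ← Finset.mul_sum]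
    congr 1
    have h2 : ∀ i', (∑ j, A i j * A i' j) * w i' = ∑ j, (A i j * (A i' j * w i')) := by
      intro i'
      rw [Finset.sum_mul]
      exact Finset.sum_congr rfl fun j _ => by ring
    rw [Finset.sum_congr rfl fun i' _ => h2 i', Finset.sum_comm]
    refine Finset.sum_congr rfl fun j _ => ?_
    rw [← Finset.mul_sum, hz]
    congr 1
    exact Finset.sum_congr rfl fun i' _ => by rw [hsymm_entries hA i' j]
  have step1 : (∑ i, (∑ i', Bm A δ i i' * v i') ^ 2) ≤ ∑ i, (∑ j, A i j * z j) ^ 2 := by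
    refine Finset.sum_le_sum fun i _ => ?_
    rw [hrow i, mul_pow]
    have h1 := ind_sq_le_one (δ i)
    nlinarith [sq_nonneg (∑ j, A i j * z j)]
  have step2 := hM z
  have step3 := hM w
  have step4 : ∑ i, (w i)^2 ≤ ∑ i, (v i)^2 := by
    refine Finset.sum_le_sum fun i _ => ?_
    rw [hw]; simp only []
    rw [mul_pow]
    have h1 := ind_sq_le_one (δ i)
    nlinarith [sq_nonneg (v i)]
  have hM2 : (0:ℝ) ≤ M^2 := sq_nonneg M
  calc ∑ i, (∑ i', Bm A δ i i' * v i') ^ 2 ≤ ∑ i, (∑ j, A i j * z j) ^ 2 := step1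
    _ ≤ M^2 * ∑ j, (z j)^2 := hM z
    _ ≤ M^2 * (M^2 * ∑ i, (w i)^2) := by
        apply mul_le_mul_of_nonneg_left ?_ hM2
        exact hM w
    _ ≤ M^2 * (M^2 * ∑ i, (v i)^2) := by
        apply mul_le_mul_of_nonneg_left (mul_le_mul_of_nonneg_left step4 hM2) hM2
    _ = (M^2)^2 * ∑ i, (v i)^2 := by ring

lemma four_flip (r a b c : Fin n) (ha : a ≠ r) (hb : b ≠ r) (hc : c ≠ r) :
    ∑ x : Fin n → Bool, signVec x a * signVec x b * signVec x c * signVec x r = 0 := by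
  apply sum_mul_signVec_eq_zero r (f := fun x => signVec x a * signVec x b * signVec x c)
  intro x bb
  simp [signVec, Function.update_of_ne ha, Function.update_of_ne hb, Function.update_of_ne hc]

lemma E_four (i j k l : Fin n) (hij : i ≠ j) (hkl : k ≠ l)
    (h1 : ¬(k = i ∧ l = j)) (h2 : ¬(k = j ∧ l = i)) :
    ∑ x : Fin n → Bool, signVec x i * signVec x j * (signVec x k * signVec x l) = 0 := by
  by_cases hik : i = k
  · have hlj : l ≠ j := fun h => h1 ⟨hik.symm, h⟩
    have hkj : k ≠ j := hik ▸ hij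
    calc ∑ x : Fin n → Bool, signVec x i * signVec x j * (signVec x k * signVec x l)
        = ∑ x : Fin n → Bool, signVec x i * signVec x k * signVec x l * signVec x j :=
          Finset.sum_congr rfl fun x _ => by ring
      _ = 0 := four_flip j i k l hij hkj hlj
  · by_cases hil : i = l
    · have hkj : k ≠ j := fun h => h2 ⟨h, hil.symm⟩
      have hlj : l ≠ j := hil ▸ hij
      calc ∑ x : Fin n → Bool, signVec x i * signVec x j * (signVec x k * signVec x l)
          = ∑ x : Fin n → Bool, signVec x i * signVec x k * signVec x l * signVec x j :=
            Finset.sum_congr rfl fun x _ => by ring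
        _ = 0 := four_flip j i k l hij hkj hlj
    · have hki : k ≠ i := fun h => hik h.symm
      have hli : l ≠ i := fun h => hil h.symm
      calc ∑ x : Fin n → Bool, signVec x i * signVec x j * (signVec x k * signVec x l)
          = ∑ x : Fin n → Bool, signVec x j * signVec x k * signVec x l * signVec x i :=
            Finset.sum_congr rfl fun x _ => by ring
        _ = 0 := four_flip i j k l hij.symm hki hli

lemma EZsq (A : Matrix (Fin n) (Fin n) ℝ) : Ex n (fun x => (Zoff A x) ^ 2) ≤ 2 * Fsq A := by
  classical
  set tf : Fin n × Fin n → (Fin n → Bool) → ℝ :=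
    fun p x => if p.1 = p.2 then 0 else A p.1 p.2 * signVec x p.1 * signVec x p.2 with htf
  have hZ : ∀ x, Zoff A x = ∑ p : Fin n × Fin n, tf p x := by
    intro x
    unfold Zoff
    rw [Fintype.sum_prod_type]
  set c : Fin n × Fin n → Fin n × Fin n → ℝ :=
    fun p q => 2^n * ((A p.1 p.2)^2 + (A q.1 q.2)^2) / 2 with hc
  have hcnn : ∀ p q, 0 ≤ c p q := by intro p q; rw [hc]; positivity
  have keyV : ∀ p q : Fin n × Fin n, (∑ x : Fin n → Bool, tf p x * tf q x)
      ≤ if q = p ∨ q = Prod.swap p then c p q else 0 := by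
    intro p q
    by_cases hp : p.1 = p.2
    · have : ∀ x, tf p x * tf q x = 0 := by intro x; rw [htf]; simp [hp]
      rw [Finset.sum_congr rfl fun x _ => this x, Finset.sum_const_zero]
      split
      · exact hcnn p q
      · exact le_refl 0
    · by_cases hq : q.1 = q.2
      · have : ∀ x, tf p x * tf q x = 0 := by intro x; rw [htf]; simp [hq]
        rw [Finset.sum_congr rfl fun x _ => this x, Finset.sum_const_zero]
        split
        · exact hcnn p q
        · exact le_refl 0
      · by_cases hqp : q = p
        · subst hqp
          have : ∀ x, tf q x * tf q x = (A q.1 q.2)^2 := by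
            intro x
            rw [htf]
            simp only [if_neg hq]
            have e1 := sq_signVec x q.1
            have e2 := sq_signVec x q.2
            calc A q.1 q.2 * signVec x q.1 * signVec x q.2 * (A q.1 q.2 * signVec x q.1 * signVec x q.2)
                = (A q.1 q.2)^2 * (signVec x q.1^2) * (signVec x q.2^2) := by ring
              _ = (A q.1 q.2)^2 := by rw [e1, e2]; ring
          rw [Finset.sum_congr rfl fun x _ => this x, Finset.sum_const, Finset.card_univ,
            nsmul_eq_mul, card_cube]
          rw [if_pos (Or.inl rfl), hc]
          ring_nf
          apply le_of_eq
          ring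
        · by_cases hqsp : q = Prod.swap p
          · have hval : ∀ x, tf p x * tf q x = A p.1 p.2 * A p.2 p.1 := by
              intro x
              rw [htf]
              simp only [if_neg hp, if_neg hq, hqsp]
              have e1 := sq_signVec x p.1
              have e2 := sq_signVec x p.2
              simp only [Prod.fst_swap, Prod.snd_swap]
              rw [if_neg (show ¬p.2 = p.1 from fun h => hp h.symm)]
              calc A p.1 p.2 * signVec x p.1 * signVec x p.2 * (A p.2 p.1 * signVec x p.2 * signVec x p.1)
                  = A p.1 p.2 * A p.2 p.1 * (signVec x p.1^2) * (signVec x p.2^2) := by ring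
                _ = A p.1 p.2 * A p.2 p.1 := by rw [e1, e2]; ring
            rw [Finset.sum_congr rfl fun x _ => hval x, Finset.sum_const, Finset.card_univ,
              nsmul_eq_mul, card_cube]
            rw [if_pos (Or.inr hqsp), hc, hqsp]
            simp only [Prod.fst_swap, Prod.snd_swap]
            have h2n : (0:ℝ) ≤ 2^n := by positivity
            nlinarith [sq_nonneg (A p.1 p.2 - A p.2 p.1)]
          · rw [if_neg (by tauto)]
            have h1 : ¬(q.1 = p.1 ∧ q.2 = p.2) := fun h => hqp (Prod.ext h.1 h.2)
            have h2 : ¬(q.1 = p.2 ∧ q.2 = p.1) := fun h => hqsp (Prod.ext h.1 h.2)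
            have hE := E_four p.1 p.2 q.1 q.2 hp hq h1 h2
            have hval : ∀ x, tf p x * tf q x
                = (A p.1 p.2 * A q.1 q.2) * (signVec x p.1 * signVec x p.2 * (signVec x q.1 * signVec x q.2)) := by
              intro x
              rw [htf]
              simp only [if_neg hp, if_neg hq]
              ring
            rw [Finset.sum_congr rfl fun x _ => hval x, ← Finset.mul_sum, hE, mul_zero]
  -- assemble
  have expand : ∑ x : Fin n → Bool, (Zoff A x)^2
      = ∑ p : Fin n × Fin n, ∑ q : Fin n × Fin n, ∑ x : Fin n → Bool, tf p x * tf q x := by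
    have h1 : ∀ x, (Zoff A x)^2 = ∑ p : Fin n × Fin n, ∑ q : Fin n × Fin n, tf p x * tf q x := by
      intro x
      rw [hZ x, sq, Finset.sum_mul_sum]
    rw [Finset.sum_congr rfl fun x _ => h1 x, Finset.sum_comm]
    exact Finset.sum_congr rfl fun p _ => Finset.sum_comm
  have inner : ∀ p : Fin n × Fin n,
      (∑ q : Fin n × Fin n, if q = p ∨ q = Prod.swap p then c p q else 0)
        ≤ c p p + c p (Prod.swap p) := by
    intro p
    have hpt : ∀ q, (if q = p ∨ q = Prod.swap p then c p q else 0)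
        ≤ (if q = p then c p q else 0) + (if q = Prod.swap p then c p q else 0) := by
      intro q
      by_cases h1 : q = p
      · rw [if_pos (Or.inl h1), if_pos h1]
        by_cases h2 : q = Prod.swap p
        · rw [if_pos h2]; linarith [hcnn p q]
        · rw [if_neg h2]; linarith
      · rw [if_neg h1]
        by_cases h2 : q = Prod.swap p
        · rw [if_pos (Or.inr h2), if_pos h2]; linarith [hcnn p q]
        · rw [if_neg (by tauto), if_neg h2]; norm_num
    refine (Finset.sum_le_sum fun q _ => hpt q).trans ?_
    rw [Finset.sum_add_distrib, Finset.sum_ite_eq', Finset.sum_ite_eq']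
    simp
  have swsum : ∑ p : Fin n × Fin n, (A p.2 p.1)^2 = ∑ p : Fin n × Fin n, (A p.1 p.2)^2 :=
    Equiv.sum_comp (Equiv.prodComm (Fin n) (Fin n)) (fun p => (A p.1 p.2)^2)
  have hFP : ∑ p : Fin n × Fin n, (A p.1 p.2)^2 = Fsq A := by
    unfold Fsq
    rw [Fintype.sum_prod_type]
  have total : ∑ p : Fin n × Fin n, (c p p + c p (Prod.swap p)) = 2 * Fsq A * 2^n := by
    have h1 : ∀ p : Fin n × Fin n, c p p + c p (Prod.swap p)
        = 2^n * (A p.1 p.2)^2 + ((2:ℝ)^n/2) * (A p.1 p.2)^2 + ((2:ℝ)^n/2) * (A p.2 p.1)^2 := by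
      intro p
      rw [hc]
      simp only [Prod.fst_swap, Prod.snd_swap]
      ring
    rw [Finset.sum_congr rfl fun p _ => h1 p, Finset.sum_add_distrib, Finset.sum_add_distrib,
      ← Finset.mul_sum, ← Finset.mul_sum, ← Finset.mul_sum, swsum, hFP]
    ring
  unfold Ex
  rw [div_le_iff₀ (by positivity : (0:ℝ) < 2^n)]
  rw [expand]
  calc ∑ p : Fin n × Fin n, ∑ q : Fin n × Fin n, ∑ x : Fin n → Bool, tf p x * tf q x
      ≤ ∑ p : Fin n × Fin n, ∑ q : Fin n × Fin n, (if q = p ∨ q = Prod.swap p then c p q else 0) :=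
        Finset.sum_le_sum fun p _ => Finset.sum_le_sum fun q _ => keyV p q
    _ ≤ ∑ p : Fin n × Fin n, (c p p + c p (Prod.swap p)) := Finset.sum_le_sum fun p _ => inner p
    _ = 2 * Fsq A * 2^n := total

lemma Ex_congr {f h : (Fin n → Bool) → ℝ} (he : ∀ x, f x = h x) : Ex n f = Ex n h := by
  unfold Ex
  rw [Finset.sum_congr rfl fun x _ => he x]

lemma Fsq_nonneg (A : Matrix (Fin n) (Fin n) ℝ) : 0 ≤ Fsq A := by
  unfold Fsq; positivity

theorem main_even : ∀ (m : ℕ) {n : ℕ} (A : Matrix (Fin n) (Fin n) ℝ), A.IsSymm →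
    ∀ M : ℝ, 0 ≤ M → OpB A M →
    Ex n (fun x => (Zoff A x) ^ (2 * m))
      ≤ (50:ℝ) ^ (2*m) * (max (Real.sqrt (2*m) * Real.sqrt (Fsq A)) ((2*m) * M)) ^ (2*m) := by
  intro m
  induction m using Nat.strong_induction_on with
  | _ m IH =>
  intro n A hA M hM0 hM
  set D := max (Real.sqrt (2*m) * Real.sqrt (Fsq A)) ((2*m) * M) with hD
  have hFsqA := Fsq_nonneg A
  have hDnn : 0 ≤ D := le_trans (by positivity) (le_max_left _ _)
  rcases Nat.lt_or_ge m 2 with hm2 | hm2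
  · interval_cases m
    · simp only [Nat.mul_zero, pow_zero]
      rw [Ex_const]
      norm_num
    · -- m = 1
      have h1 : Ex n (fun x => (Zoff A x)^(2*1)) ≤ 2 * Fsq A := by
        have := EZsq A
        simpa using this
      refine h1.trans ?_
      have h2 : 2 * Fsq A ≤ D^(2*1) := by
        have h3 : Real.sqrt (2*(1:ℕ)) * Real.sqrt (Fsq A) ≤ D := by
          rw [hD]; exact le_max_left _ _
        have h4 : (Real.sqrt (2*(1:ℕ)) * Real.sqrt (Fsq A))^2 = 2 * Fsq A := by
          rw [mul_pow, Real.sq_sqrt (by norm_num : (0:ℝ) ≤ 2*(1:ℕ)), Real.sq_sqrt hFsqA]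
          norm_num
        calc 2 * Fsq A = (Real.sqrt (2*(1:ℕ)) * Real.sqrt (Fsq A))^2 := h4.symm
          _ ≤ D^2 := by
              apply pow_le_pow_left₀ (by positivity) h3
          _ = D^(2*1) := by norm_num
      refine h2.trans ?_
      have : (1:ℝ) ≤ 50^(2*1) := by norm_num
      nlinarith [pow_nonneg hDnn (2*1)]
  · -- main case m ≥ 2
    have hMD : 0 ≤ M * D := mul_nonneg hM0 hDnn
    have h50MD : (0:ℝ) ≤ 50^m * (M*D)^m := by positivity
    -- inner bound on moments of the recursed matrix
    have inner : ∀ δ : Fin n → Bool,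
        Ex n (fun x => |Zoff (Bm A δ) x| ^ m) ≤ 50^m * (M * D)^m := by
      intro δ
      have hBsymm := Bm_symm A δ
      have hBop := OpB_Bm hA hM δ
      have hBF := Fsq_Bm hM δ
      have hM2 : (0:ℝ) ≤ M^2 := sq_nonneg M
      have maxle : ∀ jr : ℝ, 0 ≤ jr → jr ≤ 2*m →
          max (Real.sqrt jr * Real.sqrt (Fsq (Bm A δ))) (jr * M^2) ≤ M * D := by
        intro jr hjr0 hjr
        apply max_le
        · have h1 : Real.sqrt (Fsq (Bm A δ)) ≤ M * Real.sqrt (Fsq A) := by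
            have e1 : M * Real.sqrt (Fsq A) = Real.sqrt (M^2 * Fsq A) := by
              rw [Real.sqrt_mul (sq_nonneg M), Real.sqrt_sq hM0]
            rw [e1]
            exact Real.sqrt_le_sqrt hBF
          have h2 : Real.sqrt jr ≤ Real.sqrt (2*m) := Real.sqrt_le_sqrt hjr
          calc Real.sqrt jr * Real.sqrt (Fsq (Bm A δ))
              ≤ Real.sqrt (2*m) * (M * Real.sqrt (Fsq A)) :=
                mul_le_mul h2 h1 (Real.sqrt_nonneg _) (Real.sqrt_nonneg _)
            _ = M * (Real.sqrt (2*m) * Real.sqrt (Fsq A)) := by ring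
            _ ≤ M * D := mul_le_mul_of_nonneg_left (le_max_left _ _) hM0
        · calc jr * M^2 ≤ (2*m) * M^2 := mul_le_mul_of_nonneg_right hjr hM2
            _ = M * ((2*m) * M) := by ring
            _ ≤ M * D := mul_le_mul_of_nonneg_left (le_max_right _ _) hM0
      rcases Nat.even_or_odd m with ⟨u, hu⟩ | ⟨u, hu⟩
      · -- m even
        have h2u : 2*u = m := by omega
        have hult : u < m := by omega
        have happ := IH u hult (Bm A δ) hBsymm (M^2) hM2 hBop
        have hcast : (2:ℝ)*(u:ℝ) = (m:ℝ) := by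
          have : ((2*u : ℕ):ℝ) = ((m:ℕ):ℝ) := by exact_mod_cast congrArg (Nat.cast : ℕ → ℝ) h2u
          push_cast at this
          linarith
        rw [h2u, hcast] at happ
        have habs : ∀ x, |Zoff (Bm A δ) x|^m = (Zoff (Bm A δ) x)^m := fun x =>
          Even.pow_abs ⟨u, by omega⟩ _
        rw [Ex_congr habs]
        refine happ.trans ?_
        have hmax := maxle (m:ℝ) (by positivity) (by push_cast; linarith)
        exact mul_le_mul_of_nonneg_left
          (pow_le_pow_left₀ (le_trans (by positivity) (le_max_left _ _)) hmax m)
          (by positivity)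
      · -- m odd, m = 2u+1 with u ≥ 1
        have hu1 : 1 ≤ u := by omega
        set B := Bm A δ with hB
        have b1 := IH u (by omega) B hBsymm (M^2) hM2 hBop
        have b2 := IH (u+1) (by omega) B hBsymm (M^2) hM2 hBop
        have hum : (u:ℝ) ≤ (m:ℝ) := by exact_mod_cast Nat.le_of_lt (by omega)
        have hu1m : (u:ℝ)+1 ≤ (m:ℝ) := by
          have : u+1 ≤ m := by omega
          exact_mod_cast this
        have hmaxnn1 : (0:ℝ) ≤ max (Real.sqrt (2*(u:ℝ)) * Real.sqrt (Fsq B)) ((2*(u:ℝ)) * M^2) :=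
          le_trans (by positivity) (le_max_left _ _)
        have hmaxnn2 : (0:ℝ) ≤ max (Real.sqrt (2*((u+1:ℕ):ℝ)) * Real.sqrt (Fsq B)) ((2*((u+1:ℕ):ℝ)) * M^2) :=
          le_trans (by positivity) (le_max_left _ _)
        have hmax1 := maxle (2*(u:ℝ)) (by positivity) (by linarith)
        have hmax2 := maxle (2*((u+1:ℕ):ℝ)) (by positivity) (by push_cast; push_cast at hu1m; linarith)
        have b1' : Ex n (fun x => (Zoff B x)^(2*u)) ≤ 50^(2*u) * (M*D)^(2*u) :=
          b1.trans (mul_le_mul_of_nonneg_left (pow_le_pow_left₀ hmaxnn1 hmax1 _) (by positivity))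
        have b2' : Ex n (fun x => (Zoff B x)^(2*(u+1))) ≤ 50^(2*(u+1)) * (M*D)^(2*(u+1)) :=
          b2.trans (mul_le_mul_of_nonneg_left (pow_le_pow_left₀ hmaxnn2 hmax2 _) (by positivity))
        have habs2 : ∀ (x : Fin n → Bool) (t : ℕ), (|Zoff B x|^t)^2 = (Zoff B x)^(2*t) := by
          intro x t
          rw [← pow_mul, Nat.mul_comm t 2]
          exact Even.pow_abs ⟨t, by omega⟩ _
        have e1 : ∀ x : Fin n → Bool, |Zoff B x|^u * |Zoff B x|^(u+1) = |Zoff B x|^m := by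
          intro x
          rw [← pow_add]
          congr 1
          omega
        have hCS : (Ex n (fun x => |Zoff B x|^m))^2
            ≤ (Ex n (fun x => (Zoff B x)^(2*u))) * (Ex n (fun x => (Zoff B x)^(2*(u+1)))) := by
          unfold Ex
          rw [div_pow, div_mul_div_comm]
          rw [show ((2:ℝ)^n)^2 = 2^n * 2^n from sq _]
          apply div_le_div_of_nonneg_right ?_ (by positivity) |>.trans_eq rfl
          calc (∑ x : Fin n → Bool, |Zoff B x|^m)^2
              = (∑ x : Fin n → Bool, |Zoff B x|^u * |Zoff B x|^(u+1))^2 := by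
                rw [Finset.sum_congr rfl fun x _ => e1 x]
            _ ≤ (∑ x : Fin n → Bool, (|Zoff B x|^u)^2)
                  * (∑ x : Fin n → Bool, (|Zoff B x|^(u+1))^2) :=
                Finset.sum_mul_sq_le_sq_mul_sq Finset.univ _ _
            _ = (∑ x : Fin n → Bool, (Zoff B x)^(2*u))
                  * (∑ x : Fin n → Bool, (Zoff B x)^(2*(u+1))) := by
                rw [Finset.sum_congr rfl fun x _ => habs2 x u,
                  Finset.sum_congr rfl fun x _ => habs2 x (u+1)]
        have hEx1nn : 0 ≤ Ex n (fun x => (Zoff B x)^(2*u)) :=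
          Ex_nonneg fun x => by rw [← habs2 x u]; exact sq_nonneg _
        have final : (Ex n (fun x => |Zoff B x|^m))^2 ≤ (50^m * (M*D)^m)^2 := by
          refine hCS.trans ?_
          refine (mul_le_mul b1' b2' ?_ (by positivity)).trans ?_
          · exact Ex_nonneg fun x => by rw [← habs2 x (u+1)]; exact sq_nonneg _
          · apply le_of_eq
            rw [hu]
            ring
        have hExm_nn : 0 ≤ Ex n (fun x => |Zoff B x|^m) := Ex_nonneg fun x => by positivity
        calc Ex n (fun x => |Zoff B x|^m)
            = Real.sqrt ((Ex n (fun x => |Zoff B x|^m))^2) := (Real.sqrt_sq hExm_nn).symm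
          _ ≤ Real.sqrt ((50^m * (M*D)^m)^2) := Real.sqrt_le_sqrt final
          _ = 50^m * (M*D)^m := Real.sqrt_sq h50MD
    -- outer chain
    have hkh : ∀ (δ x : Fin n → Bool), Ex n (fun y => (Td A δ x y)^(2*m))
        ≤ (g m : ℝ) * (Fsq A + |Zoff (Bm A δ) x|)^m := by
      intro δ x
      have h1 := khintchine (cvec A δ x) Finset.univ m
      have h2 : Ex n (fun y => (Td A δ x y)^(2*m))
          ≤ (g m : ℝ) * (∑ j, (cvec A δ x j)^2)^m := by
        unfold Ex
        rw [div_le_iff₀ (by positivity)]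
        calc ∑ y : Fin n → Bool, (Td A δ x y)^(2*m)
            = ∑ y : Fin n → Bool, (∑ j, cvec A δ x j * signVec y j)^(2*m) :=
              Finset.sum_congr rfl fun y _ => by rw [Td_eq]
          _ ≤ (g m : ℝ) * (∑ j, (cvec A δ x j)^2)^m * 2^n := h1
      refine h2.trans ?_
      apply mul_le_mul_of_nonneg_left ?_ (by positivity)
      exact pow_le_pow_left₀ (by positivity) (csum_le A δ x) m
    have per_delta : ∀ δ, Ex n (fun x => Ex n (fun y => (Td A δ x y)^(2*m)))
        ≤ (g m : ℝ) * (2^m * (Fsq A ^ m + 50^m * (M*D)^m)) := by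
      intro δ
      refine (Ex_mono fun x => hkh δ x).trans ?_
      rw [Ex_smul]
      apply mul_le_mul_of_nonneg_left ?_ (by positivity)
      have s2 : ∀ x : Fin n → Bool, (Fsq A + |Zoff (Bm A δ) x|)^m
          ≤ 2^m * (Fsq A^m + |Zoff (Bm A δ) x|^m) := by
        intro x
        refine (add_pow_le hFsqA (abs_nonneg (Zoff (Bm A δ) x)) m).trans ?_
        apply mul_le_mul_of_nonneg_right
          (pow_le_pow_right₀ (by norm_num) (by omega)) (by positivity)
      refine (Ex_mono s2).trans ?_
      rw [Ex_smul]
      apply mul_le_mul_of_nonneg_left ?_ (by positivity)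
      rw [Ex_add, Ex_const]
      exact add_le_add (le_refl _) (inner δ)
    have step0 : ∀ x, (Zoff A x)^(2*m) ≤ 4^(2*m) * Ex n (fun δ => (Sd A δ x)^(2*m)) := by
      intro x
      rw [Zoff_eq_avg A x, mul_pow]
      apply mul_le_mul_of_nonneg_left ?_ (by positivity)
      refine (Ex_pow_le (fun δ => Sd A δ x) (2*m) (by omega)).trans ?_
      exact le_of_eq (Ex_congr fun δ => Even.pow_abs ⟨m, by omega⟩ _)
    have chain1 : Ex n (fun x => (Zoff A x)^(2*m))
        ≤ 4^(2*m) * ((g m : ℝ) * (2^m * (Fsq A^m + 50^m * (M*D)^m))) := by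
      calc Ex n (fun x => (Zoff A x)^(2*m))
          ≤ Ex n (fun x => 4^(2*m) * Ex n (fun δ => (Sd A δ x)^(2*m))) := Ex_mono step0
        _ = 4^(2*m) * Ex n (fun x => Ex n (fun δ => (Sd A δ x)^(2*m))) := Ex_smul _
        _ = 4^(2*m) * Ex n (fun δ => Ex n (fun x => (Sd A δ x)^(2*m))) := by rw [Ex_comm]
        _ = 4^(2*m) * Ex n (fun δ => Ex n (fun x => Ex n (fun y => (Td A δ x y)^(2*m)))) := by
            rw [Ex_congr (fun δ => Ex_Sd_pow A δ (2*m))]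
        _ ≤ 4^(2*m) * ((g m : ℝ) * (2^m * (Fsq A^m + 50^m * (M*D)^m))) := by
            apply mul_le_mul_of_nonneg_left ?_ (by positivity)
            refine (Ex_mono per_delta).trans ?_
            rw [Ex_const]
    refine chain1.trans ?_
    have hDsq : 2*(m:ℝ) * Fsq A ≤ D^2 := by
      have h3 : Real.sqrt (2*m) * Real.sqrt (Fsq A) ≤ D := by rw [hD]; exact le_max_left _ _
      have h4 : (Real.sqrt (2*m) * Real.sqrt (Fsq A))^2 = 2*(m:ℝ) * Fsq A := by
        rw [mul_pow, Real.sq_sqrt (by positivity), Real.sq_sqrt hFsqA]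
      calc 2*(m:ℝ)*Fsq A = (Real.sqrt (2*m) * Real.sqrt (Fsq A))^2 := h4.symm
        _ ≤ D^2 := pow_le_pow_left₀ (by positivity) h3 2
    have hDM : 2*(m:ℝ)*M ≤ D := by rw [hD]; exact le_max_right _ _
    have e1 : (2*(m:ℝ))^m * Fsq A^m ≤ D^(2*m) := by
      rw [pow_mul, ← mul_pow]
      exact pow_le_pow_left₀ (by positivity) hDsq m
    have e2 : (2*(m:ℝ))^m * (M^m * D^m) ≤ D^(2*m) := by
      calc (2*(m:ℝ))^m * (M^m * D^m) = ((2*(m:ℝ))*M)^m * D^m := by rw [mul_pow]; ring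
        _ ≤ D^m * D^m :=
            mul_le_mul_of_nonneg_right (pow_le_pow_left₀ (by positivity) hDM m)
              (pow_nonneg hDnn m)
        _ = D^(2*m) := by rw [← pow_add]; congr 1; omega
    have hg := g_le m
    have c1 : (4:ℝ)^(2*m) * ((g m:ℝ) * (2^m * (Fsq A^m + 50^m*(M*D)^m)))
        ≤ 4^(2*m) * ((2*(m:ℝ))^m * (2^m * (Fsq A^m + 50^m*(M*D)^m))) := by
      apply mul_le_mul_of_nonneg_left ?_ (by positivity)
      apply mul_le_mul_of_nonneg_right hg (by positivity)
    refine c1.trans ?_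
    have expand : (4:ℝ)^(2*m) * ((2*(m:ℝ))^m * (2^m * (Fsq A^m + 50^m*(M*D)^m)))
        = 32^m * ((2*(m:ℝ))^m * Fsq A^m)
            + 32^m * (50^m * ((2*(m:ℝ))^m * (M^m * D^m))) := by
      have h4 : (4:ℝ)^(2*m) = 16^m := by rw [pow_mul]; norm_num
      have h32 : (32:ℝ)^m = 16^m * 2^m := by rw [← mul_pow]; norm_num
      rw [h4, mul_pow M D, h32]
      ring
    rw [expand]
    have t1 : (32:ℝ)^m * ((2*(m:ℝ))^m * Fsq A^m) ≤ 32^m * D^(2*m) :=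
      mul_le_mul_of_nonneg_left e1 (by positivity)
    have t2 : (32:ℝ)^m * (50^m * ((2*(m:ℝ))^m*(M^m*D^m))) ≤ 32^m * (50^m * D^(2*m)) :=
      mul_le_mul_of_nonneg_left (mul_le_mul_of_nonneg_left e2 (by positivity)) (by positivity)
    have harith : (32:ℝ)^m * (1 + 50^m) ≤ 2500^m := by
      obtain ⟨t, rfl⟩ : ∃ t, m = t + 2 := ⟨m - 2, by omega⟩
      have h1 : (1:ℝ) + 50^(t+2) ≤ 2*50^(t+2) := by
        have h0 : (1:ℝ) ≤ 50^(t+2) := one_le_pow₀ (by norm_num)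
        linarith
      have h1600 : (32:ℝ)^(t+2) * 50^(t+2) = 1600^(t+2) := by rw [← mul_pow]; norm_num
      have hp : (1600:ℝ)^t ≤ 2500^t := pow_le_pow_left₀ (by norm_num) (by norm_num) t
      calc (32:ℝ)^(t+2)*(1+50^(t+2))
          ≤ 32^(t+2)*(2*50^(t+2)) := mul_le_mul_of_nonneg_left h1 (by positivity)
        _ = 2*(32^(t+2)*50^(t+2)) := by ring
        _ = 2*1600^(t+2) := by rw [h1600]
        _ = (2*1600^2) * 1600^t := by ring
        _ ≤ (2500^2) * 2500^t := by
            have hnn : (0:ℝ) ≤ 1600^t := by positivity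
            nlinarith [hp, hnn]
        _ = 2500^(t+2) := by ring
    have t3 : (32:ℝ)^m * D^(2*m) + 32^m*(50^m * D^(2*m)) ≤ 50^(2*m) * D^(2*m) := by
      calc (32:ℝ)^m * D^(2*m) + 32^m*(50^m*D^(2*m)) = (32^m*(1+50^m)) * D^(2*m) := by ring
        _ ≤ 2500^m * D^(2*m) := mul_le_mul_of_nonneg_right harith (pow_nonneg hDnn _)
        _ = 50^(2*m) * D^(2*m) := by rw [show ((2500:ℝ))^m = 50^(2*m) from by rw [pow_mul]; norm_num]
    linarith [t1, t2, t3]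


theorem main_all (k : ℕ) (A : Matrix (Fin n) (Fin n) ℝ) (hA : A.IsSymm)
    (M : ℝ) (hM0 : 0 ≤ M) (hM : OpB A M) :
    Ex n (fun x => |Zoff A x| ^ k)
      ≤ (100 : ℝ) ^ k * (max (Real.sqrt k * Real.sqrt (Fsq A)) (k * M)) ^ k := by
  set Dk := max (Real.sqrt k * Real.sqrt (Fsq A)) (k * M) with hDk
  have hFsqA := Fsq_nonneg A
  have hDknn : 0 ≤ Dk := le_trans (by positivity) (le_max_left _ _)
  rcases Nat.even_or_odd k with ⟨u, hu⟩ | ⟨u, hu⟩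
  · -- even k
    have h2u : 2*u = k := by omega
    have happ := main_even u A hA M hM0 hM
    have hcast : (2:ℝ)*(u:ℝ) = (k:ℝ) := by
      have : ((2*u : ℕ):ℝ) = ((k:ℕ):ℝ) := by exact_mod_cast congrArg (Nat.cast : ℕ → ℝ) h2u
      push_cast at this
      linarith
    rw [h2u, hcast] at happ
    have habs : ∀ x : Fin n → Bool, |Zoff A x|^k = (Zoff A x)^k := fun x =>
      Even.pow_abs ⟨u, by omega⟩ _
    rw [Ex_congr habs, ← hDk] at *
    refine happ.trans ?_
    exact mul_le_mul_of_nonneg_right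
      (pow_le_pow_left₀ (by norm_num) (by norm_num) k) (pow_nonneg hDknn k)
  · -- odd k
    have hk1 : 1 ≤ k := by omega
    have b1 := main_even u A hA M hM0 hM
    have b2 := main_even (u+1) A hA M hM0 hM
    have hknn : (0:ℝ) ≤ (k:ℝ) := by positivity
    have hk1' : (1:ℝ) ≤ (k:ℝ) := by exact_mod_cast hk1
    have hD1 : max (Real.sqrt (2*(u:ℝ)) * Real.sqrt (Fsq A)) ((2*(u:ℝ)) * M) ≤ 2*Dk := by
      have hc : (2:ℝ)*(u:ℝ) ≤ (k:ℝ) := by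
        have : 2*u ≤ k := by omega
        exact_mod_cast this
      apply max_le
      · calc Real.sqrt (2*(u:ℝ)) * Real.sqrt (Fsq A)
            ≤ Real.sqrt (k:ℝ) * Real.sqrt (Fsq A) :=
              mul_le_mul_of_nonneg_right (Real.sqrt_le_sqrt hc) (Real.sqrt_nonneg _)
          _ ≤ Dk := by rw [hDk]; exact le_max_left _ _
          _ ≤ 2*Dk := by linarith
      · calc (2*(u:ℝ)) * M ≤ (k:ℝ) * M := mul_le_mul_of_nonneg_right hc hM0
          _ ≤ Dk := by rw [hDk]; exact le_max_right _ _
          _ ≤ 2*Dk := by linarith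
    have hD2 : max (Real.sqrt (2*((u+1:ℕ):ℝ)) * Real.sqrt (Fsq A)) ((2*((u+1:ℕ):ℝ)) * M)
        ≤ 2*Dk := by
      have hc : (2:ℝ)*((u+1:ℕ):ℝ) ≤ 4*(k:ℝ) := by
        have : 2*(u+1) ≤ 4*k := by omega
        exact_mod_cast this
      have hc2 : (2:ℝ)*((u+1:ℕ):ℝ) ≤ 2*(k:ℝ) := by
        have : 2*(u+1) ≤ 2*k := by omega
        exact_mod_cast this
      apply max_le
      · have hs : Real.sqrt (2*((u+1:ℕ):ℝ)) ≤ 2 * Real.sqrt (k:ℝ) := by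
          have h4 : (2:ℝ) * Real.sqrt (k:ℝ) = Real.sqrt (4*(k:ℝ)) := by
            rw [show (4:ℝ)*(k:ℝ) = 2^2*(k:ℝ) from by norm_num, Real.sqrt_mul (by positivity),
              Real.sqrt_sq (by norm_num : (0:ℝ) ≤ 2)]
          rw [h4]
          exact Real.sqrt_le_sqrt hc
        calc Real.sqrt (2*((u+1:ℕ):ℝ)) * Real.sqrt (Fsq A)
            ≤ (2*Real.sqrt (k:ℝ)) * Real.sqrt (Fsq A) :=
              mul_le_mul_of_nonneg_right hs (Real.sqrt_nonneg _)
          _ = 2*(Real.sqrt (k:ℝ) * Real.sqrt (Fsq A)) := by ring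
          _ ≤ 2*Dk := by
              have : Real.sqrt (k:ℝ) * Real.sqrt (Fsq A) ≤ Dk := by
                rw [hDk]; exact le_max_left _ _
              linarith
      · calc (2*((u+1:ℕ):ℝ)) * M ≤ (2*(k:ℝ)) * M := mul_le_mul_of_nonneg_right hc2 hM0
          _ = 2*((k:ℝ)*M) := by ring
          _ ≤ 2*Dk := by
              have : (k:ℝ)*M ≤ Dk := by rw [hDk]; exact le_max_right _ _
              linarith
    have hmaxnn1 : (0:ℝ) ≤ max (Real.sqrt (2*(u:ℝ)) * Real.sqrt (Fsq A)) ((2*(u:ℝ)) * M) :=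
      le_trans (by positivity) (le_max_left _ _)
    have hmaxnn2 : (0:ℝ) ≤ max (Real.sqrt (2*((u+1:ℕ):ℝ)) * Real.sqrt (Fsq A)) ((2*((u+1:ℕ):ℝ)) * M) :=
      le_trans (by positivity) (le_max_left _ _)
    have b1' : Ex n (fun x => (Zoff A x)^(2*u)) ≤ 50^(2*u) * (2*Dk)^(2*u) :=
      b1.trans (mul_le_mul_of_nonneg_left (pow_le_pow_left₀ hmaxnn1 hD1 _) (by positivity))
    have b2' : Ex n (fun x => (Zoff A x)^(2*(u+1))) ≤ 50^(2*(u+1)) * (2*Dk)^(2*(u+1)) :=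
      b2.trans (mul_le_mul_of_nonneg_left (pow_le_pow_left₀ hmaxnn2 hD2 _) (by positivity))
    have habs2 : ∀ (x : Fin n → Bool) (t : ℕ), (|Zoff A x|^t)^2 = (Zoff A x)^(2*t) := by
      intro x t
      rw [← pow_mul, Nat.mul_comm t 2]
      exact Even.pow_abs ⟨t, by omega⟩ _
    have e1 : ∀ x : Fin n → Bool, |Zoff A x|^u * |Zoff A x|^(u+1) = |Zoff A x|^k := by
      intro x
      rw [← pow_add]
      congr 1
      omega
    have hCS : (Ex n (fun x => |Zoff A x|^k))^2
        ≤ (Ex n (fun x => (Zoff A x)^(2*u))) * (Ex n (fun x => (Zoff A x)^(2*(u+1)))) := by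
      unfold Ex
      rw [div_pow, div_mul_div_comm]
      rw [show ((2:ℝ)^n)^2 = 2^n * 2^n from sq _]
      apply div_le_div_of_nonneg_right ?_ (by positivity) |>.trans_eq rfl
      calc (∑ x : Fin n → Bool, |Zoff A x|^k)^2
          = (∑ x : Fin n → Bool, |Zoff A x|^u * |Zoff A x|^(u+1))^2 := by
            rw [Finset.sum_congr rfl fun x _ => e1 x]
        _ ≤ (∑ x : Fin n → Bool, (|Zoff A x|^u)^2)
              * (∑ x : Fin n → Bool, (|Zoff A x|^(u+1))^2) :=
            Finset.sum_mul_sq_le_sq_mul_sq Finset.univ _ _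
        _ = (∑ x : Fin n → Bool, (Zoff A x)^(2*u))
              * (∑ x : Fin n → Bool, (Zoff A x)^(2*(u+1))) := by
            rw [Finset.sum_congr rfl fun x _ => habs2 x u,
              Finset.sum_congr rfl fun x _ => habs2 x (u+1)]
    have hEx1nn : 0 ≤ Ex n (fun x => (Zoff A x)^(2*u)) :=
      Ex_nonneg fun x => by rw [← habs2 x u]; exact sq_nonneg _
    have hEx2nn : 0 ≤ Ex n (fun x => (Zoff A x)^(2*(u+1))) :=
      Ex_nonneg fun x => by rw [← habs2 x (u+1)]; exact sq_nonneg _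
    have hKnn : (0:ℝ) ≤ 100^k * Dk^k := by positivity
    have final : (Ex n (fun x => |Zoff A x|^k))^2 ≤ (100^k * Dk^k)^2 := by
      refine hCS.trans ?_
      refine (mul_le_mul b1' b2' hEx2nn (by positivity)).trans ?_
      apply le_of_eq
      rw [hu]
      rw [show (100:ℝ) = 50*2 from by norm_num]
      rw [mul_pow (50:ℝ) 2, mul_pow (2:ℝ) Dk, mul_pow (2:ℝ) Dk]
      ring
    have hExm_nn : 0 ≤ Ex n (fun x => |Zoff A x|^k) := Ex_nonneg fun x => by positivity
    calc Ex n (fun x => |Zoff A x|^k)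
        = Real.sqrt ((Ex n (fun x => |Zoff A x|^k))^2) := (Real.sqrt_sq hExm_nn).symm
      _ ≤ Real.sqrt ((100^k * Dk^k)^2) := Real.sqrt_le_sqrt final
      _ = 100^k * Dk^k := Real.sqrt_sq hKnn

theorem spectral (A : Matrix (Fin n) (Fin n) ℝ) (hA : A.IsSymm) (hn : 1 ≤ n) :
    0 ≤ lambdaMax A ∧ OpB A (lambdaMax A) := by
  classical
  have hH : A.IsHermitian := by
    show A.conjTranspose = A
    rw [Matrix.conjTranspose_eq_transpose_of_trivial]
    exact hA
  haveI : Nonempty (Fin n) := ⟨⟨0, hn⟩⟩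
  set e : Fin n → (Fin n → ℝ) := fun j => ⇑(hH.eigenvectorBasis j) with he
  set ev : Fin n → ℝ := hH.eigenvalues with hev
  have heig : ∀ j, A.mulVec (e j) = ev j • e j := fun j => hH.mulVec_eigenvectorBasis j
  have horth : ∀ j j', (∑ i, e j i * e j' i) = if j = j' then (1:ℝ) else 0 := by
    intro j j'
    have h1 := (orthonormal_iff_ite.mp hH.eigenvectorBasis.orthonormal) j j'
    rw [PiLp.inner_apply] at h1
    simp [RCLike.inner_apply, conj_trivial] at h1
    rw [← h1]
    exact Finset.sum_congr rfl fun i _ => mul_comm _ _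
  obtain ⟨i₀, _, hi₀⟩ := Finset.exists_max_image Finset.univ (fun i => |ev i|)
    ⟨⟨0, hn⟩, Finset.mem_univ _⟩
  set M0 := |ev i₀| with hM0def
  have hM0nn : 0 ≤ M0 := abs_nonneg _
  -- dual orthogonality via U * U.transpose = 1 → U.transpose * U = 1
  set U : Matrix (Fin n) (Fin n) ℝ := Matrix.of (fun j i => e j i) with hU
  have hUU : U * U.transpose = 1 := by
    apply Matrix.ext
    intro j j'
    rw [Matrix.mul_apply, Matrix.one_apply]
    rw [← horth j j']
    exact Finset.sum_congr rfl fun i _ => rfl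
  have hUtU : U.transpose * U = 1 := mul_eq_one_comm.mp hUU
  have hdual : ∀ l i, (∑ j, e j l * e j i) = if l = i then (1:ℝ) else 0 := by
    intro l i
    have h : (U.transpose * U) l i = (1 : Matrix (Fin n) (Fin n) ℝ) l i := by rw [hUtU]
    rw [Matrix.mul_apply, Matrix.one_apply] at h
    rw [← h]
    exact Finset.sum_congr rfl fun j _ => rfl
  have hexp : ∀ (v : Fin n → ℝ) (i : Fin n), (∑ j, (∑ l, e j l * v l) * e j i) = v i := by
    intro v i
    calc ∑ j, (∑ l, e j l * v l) * e j i = ∑ j, ∑ l, (e j l * v l) * e j i :=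
          Finset.sum_congr rfl fun j _ => Finset.sum_mul _ _ _
      _ = ∑ l, (v l) * (∑ j, e j l * e j i) := by
          rw [Finset.sum_comm]
          refine Finset.sum_congr rfl fun l _ => ?_
          rw [Finset.mul_sum]
          exact Finset.sum_congr rfl fun j _ => by ring
      _ = ∑ l, v l * (if l = i then 1 else 0) :=
          Finset.sum_congr rfl fun l _ => by rw [hdual l i]
      _ = ∑ l, (if l = i then v l else 0) :=
          Finset.sum_congr rfl fun l _ => by split <;> ring
      _ = v i := by rw [Finset.sum_ite_eq' Finset.univ i v]; simp
  have parseval : ∀ d : Fin n → ℝ, ∑ i, (∑ j, d j * e j i)^2 = ∑ j, (d j)^2 := by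
    intro d
    have h1 : ∀ i : Fin n, (∑ j, d j * e j i)^2 = ∑ j, ∑ j', (d j * e j i) * (d j' * e j' i) := by
      intro i
      rw [sq, Finset.sum_mul_sum]
    rw [Finset.sum_congr rfl fun i _ => h1 i, Finset.sum_comm]
    have h2 : ∀ j, (∑ i, ∑ j', (d j * e j i) * (d j' * e j' i))
        = ∑ j', (d j * d j') * ∑ i, e j i * e j' i := by
      intro j
      rw [Finset.sum_comm]
      refine Finset.sum_congr rfl fun j' _ => ?_
      rw [Finset.mul_sum]
      exact Finset.sum_congr rfl fun i _ => by ring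
    rw [Finset.sum_congr rfl fun j _ => h2 j]
    refine Finset.sum_congr rfl fun j _ => ?_
    calc ∑ j', (d j * d j') * ∑ i, e j i * e j' i
        = ∑ j', (if j = j' then d j * d j' else 0) := by
          refine Finset.sum_congr rfl fun j' _ => ?_
          rw [horth j j']
          split <;> ring
      _ = d j ^ 2 := by rw [Finset.sum_ite_eq Finset.univ j (fun j' => d j * d j')]; simp [sq]
  have hop : OpB A M0 := by
    intro v
    set c : Fin n → ℝ := fun j => ∑ l, e j l * v l with hc
    have hAv : ∀ i, (∑ l, A i l * v l) = ∑ j, (c j * ev j) * e j i := by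
      intro i
      have hmv : ∀ j (i : Fin n), (∑ l, A i l * e j l) = ev j * e j i := by
        intro j i
        have h := congrFun (heig j) i
        simpa [Matrix.mulVec, dotProduct] using h
      calc ∑ l, A i l * v l = ∑ l, A i l * (∑ j, c j * e j l) := by
            refine Finset.sum_congr rfl fun l _ => ?_
            rw [show (∑ j, c j * e j l) = v l from hexp v l]
        _ = ∑ j, ∑ l, c j * (A i l * e j l) := by
            rw [Finset.sum_comm]
            refine Finset.sum_congr rfl fun l _ => ?_
            rw [Finset.mul_sum]
            exact Finset.sum_congr rfl fun j _ => by ring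
        _ = ∑ j, (c j * ev j) * e j i := by
            refine Finset.sum_congr rfl fun j _ => ?_
            rw [← Finset.mul_sum, hmv j i]
            ring
    have hev2 : ∀ j, (ev j)^2 ≤ M0^2 := by
      intro j
      have h := hi₀ j (Finset.mem_univ j)
      calc (ev j)^2 = |ev j|^2 := (sq_abs _).symm
        _ ≤ M0^2 := pow_le_pow_left₀ (abs_nonneg _) h 2
    have hcv : ∑ i, (v i)^2 = ∑ j, (c j)^2 := by
      rw [← parseval c]
      refine Finset.sum_congr rfl fun i _ => ?_
      rw [show (∑ j, c j * e j i) = v i from hexp v i]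
    calc ∑ i, (∑ l, A i l * v l)^2
        = ∑ i, (∑ j, (c j * ev j) * e j i)^2 :=
          Finset.sum_congr rfl fun i _ => by rw [hAv i]
      _ = ∑ j, (c j * ev j)^2 := parseval _
      _ ≤ ∑ j, M0^2 * (c j)^2 := by
          refine Finset.sum_le_sum fun j _ => ?_
          calc (c j * ev j)^2 = (ev j)^2 * (c j)^2 := by ring
            _ ≤ M0^2 * (c j)^2 := mul_le_mul_of_nonneg_right (hev2 j) (sq_nonneg _)
      _ = M0^2 * ∑ j, (c j)^2 := (Finset.mul_sum _ _ _).symm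
      _ = M0^2 * ∑ i, (v i)^2 := by rw [hcv]
  have hmem : M0 ∈ {r : ℝ | ∃ μ : ℝ, IsEigenvalue A μ ∧ r = |μ|} := by
    refine ⟨ev i₀, ⟨e i₀, ?_, heig i₀⟩, rfl⟩
    intro h0
    have h1 := horth i₀ i₀
    rw [if_pos rfl, h0] at h1
    simp at h1
  have hub : ∀ r ∈ {r : ℝ | ∃ μ : ℝ, IsEigenvalue A μ ∧ r = |μ|}, r ≤ M0 := by
    rintro r ⟨μ, ⟨v, hv0, hvec⟩, rfl⟩
    have h1 : ∀ i, (∑ l, A i l * v l) = μ * v i := by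
      intro i
      have := congrFun hvec i
      simpa [Matrix.mulVec, dotProduct] using this
    have hsum : ∑ i, (∑ l, A i l * v l)^2 = μ^2 * ∑ i, (v i)^2 := by
      rw [Finset.sum_congr rfl fun i (_ : i ∈ Finset.univ) => by rw [h1 i]]
      rw [Finset.mul_sum]
      exact Finset.sum_congr rfl fun i _ => by ring
    have hpos : 0 < ∑ i, (v i)^2 := by
      have h2 : ∃ i, v i ≠ 0 := by
        by_contra hcon
        push_neg at hcon
        exact hv0 (funext fun i => hcon i)
      obtain ⟨i, hi⟩ := h2
      exact Finset.sum_pos' (fun i _ => sq_nonneg _) ⟨i, Finset.mem_univ i, by positivity⟩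
    have hineq := hop v
    rw [hsum] at hineq
    have hmu2 : μ^2 ≤ M0^2 := by nlinarith
    calc |μ| = Real.sqrt (μ^2) := (Real.sqrt_sq_eq_abs μ).symm
      _ ≤ Real.sqrt (M0^2) := Real.sqrt_le_sqrt hmu2
      _ = M0 := Real.sqrt_sq hM0nn
  have hlam : lambdaMax A = M0 := by
    unfold lambdaMax
    apply le_antisymm
    · exact csSup_le ⟨M0, hmem⟩ hub
    · exact le_csSup ⟨M0, hub⟩ hmem
  rw [hlam]
  exact ⟨hM0nn, hop⟩

end HW

/-- A spectral moment bound for quadratic forms over the hypercube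
(Theorem `eigenbound`). -/
theorem spectral_moment_bound_quadratic_forms :
    ∃ C : ℝ, 0 < C ∧
      ∀ (n : ℕ), 1 ≤ n →
      ∀ A : Matrix (Fin n) (Fin n) ℝ, A.IsSymm →
      ∀ k : ℕ, 2 ≤ k →
        expUnif n (fun x => |dotProduct x (A.mulVec x) - A.trace| ^ k)
          ≤ C ^ k * max (Real.sqrt k * frobNorm A) (k * lambdaMax A) ^ k := by
  refine ⟨100, by norm_num, fun n hn A hA k hk => ?_⟩
  obtain ⟨hM0, hM⟩ := HW.spectral A hA hn
  have h1 : expUnif n (fun x => |dotProduct x (A.mulVec x) - A.trace| ^ k)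
      = HW.Ex n (fun x => |HW.Zoff A x| ^ k) := by
    unfold expUnif HW.Ex
    congr 1
    exact Finset.sum_congr rfl fun x _ => by simp only []; rw [HW.quadform_eq]
  rw [h1]
  have h2 := HW.main_all k A hA (lambdaMax A) hM0 hM
  have h3 : frobNorm A = Real.sqrt (HW.Fsq A) := rfl
  rw [h3]
  exact h2
end

section
/- There is a universal constant C > 0 such that the following holds. Let f(x) = ∑_{i≤j} a_{ij} x_i x_j be a quadratic form in n variables with associated symmetric matrix A_f (so f(x) = xᵀA_f x), let k ≥ 2 be an integer, and let X = (X₁,…,Xₙ) be independent uniform ±1 random variables. Then E[|f(X)|^k] ≤ C^k · max{‖A_f‖₂ · k, |tr(A_f)|}^k. -/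
open MeasureTheory

open Finset

lemma sum_cons_split (n : ℕ) (F : (Fin (n+1) → Bool) → ℝ) :
    ∑ x : Fin (n+1) → Bool, F x
      = ∑ y : Fin n → Bool, (F (Fin.cons false y) + F (Fin.cons true y)) := by
  rw [← (Fin.consEquiv (fun _ : Fin (n+1) => Bool)).sum_comp, Fintype.sum_prod_type]
  simp [Fin.consEquiv, Finset.sum_add_distrib, add_comm]

/-- sign of a single bool -/
def sgn (b : Bool) : ℝ := if b then 1 else -1

noncomputable def PF {n : ℕ} (c : (Fin n → Bool) → ℝ) (x : Fin n → Bool) : ℝ :=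
  ∑ σ : Fin n → Bool, c σ * ∏ i, (if σ i then signVec x i else 1)

def degB {n : ℕ} (σ : Fin n → Bool) : ℕ := ∑ i, (if σ i then 1 else 0)

lemma PF_cons {n : ℕ} (c : (Fin (n+1) → Bool) → ℝ) (b : Bool) (y : Fin n → Bool) :
    PF c (Fin.cons b y) = PF (fun τ => c (Fin.cons false τ)) y
      + sgn b * PF (fun τ => c (Fin.cons true τ)) y := by
  unfold PF
  rw [sum_cons_split n (fun σ => c σ * ∏ i, (if σ i then signVec (Fin.cons b y) i else 1))]
  rw [Finset.sum_add_distrib, Finset.mul_sum]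
  congr 1
  · apply Finset.sum_congr rfl; intro τ _
    rw [Fin.prod_univ_succ]
    simp [signVec, Fin.cons_zero, Fin.cons_succ]
  · apply Finset.sum_congr rfl; intro τ _
    rw [Fin.prod_univ_succ]
    simp only [Fin.cons_zero, Fin.cons_succ, if_true]
    have : (signVec (Fin.cons b y) 0) = sgn b := by simp [signVec, sgn, Fin.cons_zero]
    rw [this]
    have : ∀ i : Fin n, (if τ i then signVec (Fin.cons b y) i.succ else 1)
        = (if τ i then signVec y i else 1) := by
      intro i; simp [signVec, Fin.cons_succ]
    simp only [this]
    ring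


lemma choose_ineq (m : ℕ) (hm : 1 ≤ m) :
    ∀ j : ℕ, (Nat.choose (2*m) (2*j) : ℝ) ≤ (Nat.choose m j : ℝ) * (2*(m:ℝ)-1)^j := by
  have hM : (1:ℝ) ≤ (m:ℝ) := by exact_mod_cast hm
  intro j
  induction j with
  | zero => simp
  | succ j ih =>
    by_cases hj : j + 1 ≤ m
    · have h2j : 2*j+1 ≤ 2*m := by omega
      have e1 : (Nat.choose (2*m) (2*j+1) : ℝ) * (2*(j:ℝ)+1)
          = (Nat.choose (2*m) (2*j) : ℝ) * (2*(m:ℝ) - 2*j) := by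
        have h := Nat.choose_succ_right_eq (2*m) (2*j)
        have hc := congrArg (fun t : ℕ => (t : ℝ)) h
        push_cast [Nat.cast_sub (by omega : 2*j ≤ 2*m)] at hc
        linarith [hc]
      have e2 : (Nat.choose (2*m) (2*j+2) : ℝ) * (2*(j:ℝ)+2)
          = (Nat.choose (2*m) (2*j+1) : ℝ) * (2*(m:ℝ) - 2*j - 1) := by
        have h := Nat.choose_succ_right_eq (2*m) (2*j+1)
        have hc := congrArg (fun t : ℕ => (t : ℝ)) h
        push_cast [Nat.cast_sub h2j] at hc
        linarith [hc]
      have e3 : (Nat.choose m (j+1) : ℝ) * ((j:ℝ)+1)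
          = (Nat.choose m j : ℝ) * ((m:ℝ) - j) := by
        have h := Nat.choose_succ_right_eq m j
        have hc := congrArg (fun t : ℕ => (t : ℝ)) h
        push_cast [Nat.cast_sub (by omega : j ≤ m)] at hc
        linarith [hc]
      have hmj : (1:ℝ) ≤ (m:ℝ) - j := by
        have : (j:ℝ)+1 ≤ (m:ℝ) := by exact_mod_cast hj
        linarith
      have hchoose_nonneg : (0:ℝ) ≤ (Nat.choose m j : ℝ) := by positivity
      have hpow_nonneg : (0:ℝ) ≤ (2*(m:ℝ)-1)^j := pow_nonneg (by linarith) j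
      have e12 : (Nat.choose (2*m) (2*j+2) : ℝ) * ((2*(j:ℝ)+1) * (2*(j:ℝ)+2))
          = (Nat.choose (2*m) (2*j) : ℝ) * ((2*(m:ℝ) - 2*j) * (2*(m:ℝ) - 2*j - 1)) := by
        linear_combination (2*(j:ℝ)+1) * e2 + (2*(m:ℝ) - 2*j - 1) * e1
      rw [show 2*(j+1) = 2*j+2 by ring]
      rw [← mul_le_mul_iff_of_pos_right (show (0:ℝ) < (2*(j:ℝ)+1)*(2*(j:ℝ)+2)*((j:ℝ)+1) by positivity)]
      have ha1 : (0:ℝ) ≤ 2*(m:ℝ) - 2*j := by linarith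
      have ha2 : (0:ℝ) ≤ 2*(m:ℝ) - 2*j - 1 := by linarith
      have hG : (0:ℝ) ≤ ((2*(m:ℝ) - 2*j) * (2*(m:ℝ) - 2*j - 1)) * ((j:ℝ)+1) :=
        mul_nonneg (mul_nonneg ha1 ha2) (by positivity)
      have key : ((2*(m:ℝ) - 2*j) * (2*(m:ℝ) - 2*j - 1)) * ((j:ℝ)+1)
          ≤ ((m:ℝ) - j) * (2*(m:ℝ)-1) * ((2*(j:ℝ)+1)*(2*(j:ℝ)+2)) := by
        have h1 : 2*(m:ℝ)-2*j-1 ≤ (2*(m:ℝ)-1)*(2*(j:ℝ)+1) := by nlinarith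
        have h2 : (0:ℝ) ≤ 2*((m:ℝ)-j)*((j:ℝ)+1) :=
          mul_nonneg (by linarith) (by positivity)
        calc ((2*(m:ℝ) - 2*j) * (2*(m:ℝ) - 2*j - 1)) * ((j:ℝ)+1)
            = (2*((m:ℝ)-j)*((j:ℝ)+1)) * (2*(m:ℝ)-2*j-1) := by ring
          _ ≤ (2*((m:ℝ)-j)*((j:ℝ)+1)) * ((2*(m:ℝ)-1)*(2*(j:ℝ)+1)) :=
              mul_le_mul_of_nonneg_left h1 h2
          _ = ((m:ℝ) - j) * (2*(m:ℝ)-1) * ((2*(j:ℝ)+1)*(2*(j:ℝ)+2)) := by ring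
      calc (Nat.choose (2*m) (2*j+2) : ℝ) * ((2*(j:ℝ)+1)*(2*(j:ℝ)+2)*((j:ℝ)+1))
          = (Nat.choose (2*m) (2*j) : ℝ) * (((2*(m:ℝ) - 2*j) * (2*(m:ℝ) - 2*j - 1)) * ((j:ℝ)+1)) := by
            linear_combination ((j:ℝ)+1) * e12
        _ ≤ ((Nat.choose m j : ℝ) * (2*(m:ℝ)-1)^j) * (((2*(m:ℝ) - 2*j) * (2*(m:ℝ) - 2*j - 1)) * ((j:ℝ)+1)) :=
            mul_le_mul_of_nonneg_right ih hG
        _ ≤ ((Nat.choose m j : ℝ) * (2*(m:ℝ)-1)^j) * (((m:ℝ) - j) * (2*(m:ℝ)-1) * ((2*(j:ℝ)+1)*(2*(j:ℝ)+2))) :=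
            mul_le_mul_of_nonneg_left key (by positivity)
        _ = ((Nat.choose m j : ℝ) * ((m:ℝ) - j)) * ((2*(m:ℝ)-1)^j * (2*(m:ℝ)-1)) * ((2*(j:ℝ)+1)*(2*(j:ℝ)+2)) := by
            ring
        _ = (Nat.choose m (j+1) : ℝ) * (2*(m:ℝ)-1)^(j+1) * ((2*(j:ℝ)+1)*(2*(j:ℝ)+2)*((j:ℝ)+1)) := by
            rw [← e3, ← pow_succ]; ring
    · have h1 : Nat.choose (2*m) (2*(j+1)) = 0 := by
        apply Nat.choose_eq_zero_of_lt; omega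
      have h2 : Nat.choose m (j+1) = 0 := by
        apply Nat.choose_eq_zero_of_lt; omega
      rw [show 2*(j+1) = 2*j+2 by ring] at h1 ⊢
      rw [h1, h2]; simp

lemma two_point (m : ℕ) (hm : 1 ≤ m) (a b : ℝ) :
    (a+b)^(2*m) + (a-b)^(2*m) ≤ 2 * (a^2 + (2*(m:ℝ)-1)*b^2)^m := by
  set f : ℕ → ℝ := fun i => (a^i * b^(2*m-i) * (Nat.choose (2*m) i : ℝ)) * (1 + (-1:ℝ)^(2*m-i))
    with hf
  have expand : (a+b)^(2*m) + (a-b)^(2*m) = ∑ i ∈ Finset.range (2*m+1), f i := by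
    rw [add_pow, show a - b = a + (-b) by ring, add_pow, ← Finset.sum_add_distrib]
    apply Finset.sum_congr rfl; intro i hi
    rw [hf]; simp only
    rw [neg_pow]
    ring
  have himsub : Finset.image (fun j => 2*j) (Finset.range (m+1)) ⊆ Finset.range (2*m+1) := by
    intro x hx
    simp only [Finset.mem_image, Finset.mem_range] at hx ⊢
    obtain ⟨j, hj, rfl⟩ := hx; omega
  have evens : ∑ i ∈ Finset.range (2*m+1), f i = ∑ j ∈ Finset.range (m+1), f (2*j) := by
    rw [← Finset.sum_image (g := fun j => 2*j)
      (f := f) (fun x _ y _ h => by simp only at h; omega)]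
    apply (Finset.sum_subset himsub ?_).symm
    intro x hx hnx
    simp only [Finset.mem_range] at hx
    simp only [Finset.mem_image, Finset.mem_range] at hnx
    have hodd : Odd x := by
      rcases Nat.even_or_odd x with he | ho
      · obtain ⟨j, rfl⟩ := he
        exact absurd ⟨j, by omega, by omega⟩ hnx
      · exact ho
    have h2 : Odd (2*m - x) := Nat.Even.sub_odd (by omega) (by exact ⟨m, by ring⟩) hodd
    rw [hf]; simp only
    rw [h2.neg_one_pow]
    ring
  rw [expand, evens, add_pow, Finset.mul_sum]
  apply Finset.sum_le_sum
  intro j hj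
  simp only [Finset.mem_range] at hj
  have hjm : j ≤ m := by omega
  have heven : (-1:ℝ)^(2*m-2*j) = 1 := by
    have : 2*m - 2*j = 2*(m-j) := by omega
    rw [this, pow_mul]; norm_num
  rw [hf]; simp only
  rw [heven]
  have hb2 : b^(2*m-2*j) = (b^2)^(m-j) := by
    rw [show 2*m-2*j = 2*(m-j) by omega, pow_mul]
  have ha2 : a^(2*j) = (a^2)^j := by rw [pow_mul]
  -- choose inequality with index m-j
  have hc : (Nat.choose (2*m) (2*j) : ℝ) ≤ (Nat.choose m j : ℝ) * (2*(m:ℝ)-1)^(m-j) := by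
    have h1 := choose_ineq m hm (m - j)
    rw [show 2*(m-j) = 2*m - 2*j by omega] at h1
    rw [Nat.choose_symm (by omega : 2*j ≤ 2*m), Nat.choose_symm hjm] at h1
    exact h1
  have hnn : (0:ℝ) ≤ (a^2)^j * (b^2)^(m-j) := by positivity
  calc a^(2*j) * b^(2*m-2*j) * (Nat.choose (2*m) (2*j) : ℝ) * (1+1)
      = (Nat.choose (2*m) (2*j) : ℝ) * (2 * ((a^2)^j * (b^2)^(m-j))) := by
        rw [ha2, hb2]; ring
    _ ≤ ((Nat.choose m j : ℝ) * (2*(m:ℝ)-1)^(m-j)) * (2 * ((a^2)^j * (b^2)^(m-j))) := by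
        apply mul_le_mul_of_nonneg_right hc (by positivity)
    _ = 2 * ((a^2)^j * ((2*(m:ℝ)-1)*b^2)^(m-j) * (Nat.choose m j : ℝ)) := by
        rw [mul_pow]; ring

lemma minkW {ι : Type*} [Fintype ι] (u v : ι → ℝ) (hu : ∀ i, 0 ≤ u i) (hv : ∀ i, 0 ≤ v i)
    (m : ℕ) (hm : 1 ≤ m) {W α β : ℝ} (hW : 0 ≤ W) (hα : 0 ≤ α) (hβ : 0 ≤ β)
    (h1 : ∑ i, (u i)^m ≤ W * α^m) (h2 : ∑ i, (v i)^m ≤ W * β^m) :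
    ∑ i, (u i + v i)^m ≤ W * (α + β)^m := by
  have hp : (1:ℝ) ≤ (m:ℝ) := by exact_mod_cast hm
  have hm0 : ((m:ℝ)) ≠ 0 := by positivity
  have hmpos : (0:ℝ) < (m:ℝ) := by linarith
  have key := Real.Lp_add_le_of_nonneg (s := (Finset.univ : Finset ι)) (p := (m:ℝ))
      (f := u) (g := v) hp (fun i _ => hu i) (fun i _ => hv i)
  simp only [Real.rpow_natCast] at key
  have hXnn : (0:ℝ) ≤ ∑ i, (u i + v i)^m :=
    Finset.sum_nonneg fun i _ => pow_nonneg (add_nonneg (hu i) (hv i)) m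
  have hWpow : (W ^ (1/(m:ℝ))) ^ ((m:ℝ)) = W := by
    rw [← Real.rpow_mul hW, one_div, inv_mul_cancel₀ hm0, Real.rpow_one]
  have hWnn : 0 ≤ W ^ (1/(m:ℝ)) := Real.rpow_nonneg hW _
  have b1 : (∑ i, u i ^ m) ^ (1/(m:ℝ)) ≤ W ^ (1/(m:ℝ)) * α := by
    calc (∑ i, u i ^ m) ^ (1/(m:ℝ)) ≤ (W * α^m) ^ (1/(m:ℝ)) :=
        Real.rpow_le_rpow (Finset.sum_nonneg fun i _ => pow_nonneg (hu i) m) h1 (by positivity)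
      _ = W ^ (1/(m:ℝ)) * α := by
        rw [Real.mul_rpow hW (by positivity), ← Real.rpow_natCast α m, ← Real.rpow_mul hα,
          mul_one_div, div_self hm0, Real.rpow_one]
  have b2 : (∑ i, v i ^ m) ^ (1/(m:ℝ)) ≤ W ^ (1/(m:ℝ)) * β := by
    calc (∑ i, v i ^ m) ^ (1/(m:ℝ)) ≤ (W * β^m) ^ (1/(m:ℝ)) :=
        Real.rpow_le_rpow (Finset.sum_nonneg fun i _ => pow_nonneg (hv i) m) h2 (by positivity)
      _ = W ^ (1/(m:ℝ)) * β := by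
        rw [Real.mul_rpow hW (by positivity), ← Real.rpow_natCast β m, ← Real.rpow_mul hβ,
          mul_one_div, div_self hm0, Real.rpow_one]
  calc ∑ i, (u i + v i)^m
      = ((∑ i, (u i + v i)^m) ^ (1/(m:ℝ))) ^ ((m:ℝ)) := by
        rw [← Real.rpow_mul hXnn, one_div, inv_mul_cancel₀ hm0, Real.rpow_one]
    _ ≤ (W ^ (1/(m:ℝ)) * (α + β)) ^ ((m:ℝ)) := by
        apply Real.rpow_le_rpow (Real.rpow_nonneg hXnn _) _ hmpos.le
        calc (∑ i, (u i + v i)^m) ^ (1/(m:ℝ)) ≤ _ + _ := key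
          _ ≤ W ^ (1/(m:ℝ)) * α + W ^ (1/(m:ℝ)) * β := add_le_add b1 b2
          _ = W ^ (1/(m:ℝ)) * (α + β) := by ring
    _ = W * (α + β)^((m:ℝ)) := by
        rw [Real.mul_rpow hWnn (by positivity), hWpow]
    _ = W * (α + β)^m := by rw [Real.rpow_natCast]

lemma degB_cons {n : ℕ} (b : Bool) (τ : Fin n → Bool) :
    degB (Fin.cons b τ) = (if b then 1 else 0) + degB τ := by
  unfold degB
  rw [Fin.sum_univ_succ]
  simp [Fin.cons_zero, Fin.cons_succ]

lemma hyper (m : ℕ) (hm : 1 ≤ m) :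
    ∀ (n : ℕ) (d : ℕ) (c : (Fin n → Bool) → ℝ),
      (∀ σ, c σ ≠ 0 → degB σ ≤ d) →
      ∑ x : Fin n → Bool, (PF c x) ^ (2*m)
        ≤ 2^n * ((2*(m:ℝ)-1)^d * ∑ σ : Fin n → Bool, (c σ)^2)^m := by
  have hM1 : (1:ℝ) ≤ 2*(m:ℝ)-1 := by
    have : (1:ℝ) ≤ (m:ℝ) := by exact_mod_cast hm
    linarith
  have hM0 : (0:ℝ) ≤ 2*(m:ℝ)-1 := by linarith
  intro n
  induction n with
  | zero =>
    intro d c hdeg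
    have huniq : ∀ (g : (Fin 0 → Bool) → ℝ) (x0 : Fin 0 → Bool),
        ∑ x : Fin 0 → Bool, g x = g x0 := by
      intro g x0
      rw [Fintype.sum_unique g]
      exact congrArg g (Subsingleton.elim _ _)
    have x0 : Fin 0 → Bool := fun i => i.elim0
    rw [huniq (fun x => (PF c x) ^ (2*m)) x0, huniq (fun σ => (c σ)^2) x0]
    have hPF : PF c x0 = c x0 := by
      unfold PF
      rw [huniq (fun σ => c σ * ∏ i, (if σ i then signVec x0 i else 1)) x0]
      simp
    rw [hPF, pow_mul]
    have hone : (1:ℝ) ≤ (2*(m:ℝ)-1)^d := one_le_pow₀ hM1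
    have h1 : ((c x0)^2)^m ≤ ((2*(m:ℝ)-1)^d * (c x0)^2)^m := by
      apply pow_le_pow_left₀ (by positivity)
      nlinarith [sq_nonneg (c x0)]
    calc ((c x0)^2)^m ≤ ((2*(m:ℝ)-1)^d * (c x0)^2)^m := h1
      _ = 2^(0:ℕ) * ((2*(m:ℝ)-1)^d * (c x0)^2)^m := by norm_num
  | succ n IH =>
    intro d c hdeg
    set c0 : (Fin n → Bool) → ℝ := fun τ => c (Fin.cons false τ) with hc0
    set c1 : (Fin n → Bool) → ℝ := fun τ => c (Fin.cons true τ) with hc1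
    set u : (Fin n → Bool) → ℝ := fun y => (PF c0 y)^2 with hu
    set v : (Fin n → Bool) → ℝ := fun y => (2*(m:ℝ)-1) * (PF c1 y)^2 with hv
    have hdeg0 : ∀ τ, c0 τ ≠ 0 → degB τ ≤ d := by
      intro τ hτ
      have h := hdeg _ hτ
      rw [degB_cons] at h
      simpa using h
    -- sum of squares splits
    have Ssplit : ∑ σ : Fin (n+1) → Bool, (c σ)^2
        = (∑ τ : Fin n → Bool, (c0 τ)^2) + ∑ τ : Fin n → Bool, (c1 τ)^2 := by
      rw [sum_cons_split n (fun σ => (c σ)^2), Finset.sum_add_distrib]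
    -- pointwise bound and main sum
    have main : ∑ x : Fin (n+1) → Bool, (PF c x) ^ (2*m)
        ≤ 2 * ∑ y : Fin n → Bool, (u y + v y)^m := by
      rw [sum_cons_split n (fun x => (PF c x)^(2*m)), Finset.mul_sum]
      apply Finset.sum_le_sum
      intro y _
      rw [PF_cons, PF_cons]
      simp only [sgn, if_true, if_false, Bool.false_eq_true]
      have := two_point m hm (PF c0 y) (PF c1 y)
      calc (PF c0 y + -1 * PF c1 y) ^ (2*m) + (PF c0 y + 1 * PF c1 y) ^ (2*m)
          = (PF c0 y + PF c1 y) ^ (2*m) + (PF c0 y - PF c1 y) ^ (2*m) := by ring_nf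
        _ ≤ 2 * ((PF c0 y)^2 + (2*(m:ℝ)-1)*(PF c1 y)^2)^m := this
        _ = 2 * (u y + v y)^m := rfl
    -- bounds for u and v
    have hub : ∑ y : Fin n → Bool, (u y)^m
        ≤ 2^n * ((2*(m:ℝ)-1)^d * ∑ τ : Fin n → Bool, (c0 τ)^2)^m := by
      have : ∀ y, (u y)^m = (PF c0 y)^(2*m) := by
        intro y; rw [hu]; simp only; rw [← pow_mul, mul_comm 2 m, mul_comm m 2]
      simp only [this]
      exact IH d c0 hdeg0
    have hvb : ∑ y : Fin n → Bool, (v y)^m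
        ≤ 2^n * ((2*(m:ℝ)-1)^d * ∑ τ : Fin n → Bool, (c1 τ)^2)^m := by
      rcases Nat.eq_zero_or_pos d with hd0 | hdpos
      · -- d = 0 : c1 ≡ 0
        have hz : ∀ τ, c1 τ = 0 := by
          intro τ
          by_contra hne
          have := hdeg _ hne
          rw [degB_cons, hd0] at this
          simp at this
        have hP1 : ∀ y, PF c1 y = 0 := by
          intro y; unfold PF; simp only [hz]; simp
        have hm' : m ≠ 0 := by omega
        simp only [hv, hP1, hz]
        simp [zero_pow hm', hm']
      · -- d ≥ 1
        have hdeg1 : ∀ τ, c1 τ ≠ 0 → degB τ ≤ d - 1 := by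
          intro τ hτ
          have := hdeg _ hτ
          rw [degB_cons, if_pos rfl] at this
          omega
        have h1 := IH (d-1) c1 hdeg1
        have : ∀ y, (v y)^m = (2*(m:ℝ)-1)^m * (PF c1 y)^(2*m) := by
          intro y; rw [hv]; simp only
          rw [mul_pow, ← pow_mul, mul_comm 2 m, mul_comm m 2]
        simp only [this]
        rw [← Finset.mul_sum]
        set S1 : ℝ := ∑ τ : Fin n → Bool, (c1 τ)^2 with hS1def
        have hd' : d - 1 + 1 = d := by omega
        calc (2*(m:ℝ)-1)^m * ∑ y : Fin n → Bool, (PF c1 y)^(2*m)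
            ≤ (2*(m:ℝ)-1)^m * (2^n * ((2*(m:ℝ)-1)^(d-1) * S1)^m) := by
              apply mul_le_mul_of_nonneg_left h1 (by positivity)
          _ = 2^n * (((2*(m:ℝ)-1)^d * S1)^m) := by
              have hfact : (2*(m:ℝ)-1)^d = (2*(m:ℝ)-1) * (2*(m:ℝ)-1)^(d-1) := by
                conv_lhs => rw [← hd']
                rw [pow_succ]; ring
              rw [hfact,
                show (2*(m:ℝ)-1) * (2*(m:ℝ)-1)^(d-1) * S1
                  = (2*(m:ℝ)-1) * ((2*(m:ℝ)-1)^(d-1) * S1) by ring,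
                mul_pow, mul_pow]
              ring
    -- combine via weighted Minkowski
    have hS0 : (0:ℝ) ≤ ∑ τ : Fin n → Bool, (c0 τ)^2 := Finset.sum_nonneg fun τ _ => sq_nonneg _
    have hS1 : (0:ℝ) ≤ ∑ τ : Fin n → Bool, (c1 τ)^2 := Finset.sum_nonneg fun τ _ => sq_nonneg _
    have hmk := minkW u v (fun y => by rw [hu]; positivity)
      (fun y => by rw [hv]; simp only; positivity) m hm
      (W := (2:ℝ)^n)
      (α := (2*(m:ℝ)-1)^d * ∑ τ : Fin n → Bool, (c0 τ)^2)
      (β := (2*(m:ℝ)-1)^d * ∑ τ : Fin n → Bool, (c1 τ)^2)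
      (by positivity) (by positivity) (by positivity) hub hvb
    calc ∑ x : Fin (n+1) → Bool, (PF c x) ^ (2*m)
        ≤ 2 * ∑ y : Fin n → Bool, (u y + v y)^m := main
      _ ≤ 2 * ((2:ℝ)^n * ((2*(m:ℝ)-1)^d * (∑ τ : Fin n → Bool, (c0 τ)^2)
            + (2*(m:ℝ)-1)^d * ∑ τ : Fin n → Bool, (c1 τ)^2)^m) := by
          apply mul_le_mul_of_nonneg_left hmk (by norm_num)
      _ = 2^(n+1) * ((2*(m:ℝ)-1)^d * ∑ σ : Fin (n+1) → Bool, (c σ)^2)^m := by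
          rw [Ssplit]
          ring

def pairInd {n : ℕ} (i j : Fin n) : Fin n → Bool := fun l => decide (l = i ∨ l = j)

noncomputable def qc {n : ℕ} (A : Matrix (Fin n) (Fin n) ℝ) : (Fin n → Bool) → ℝ :=
  fun σ => ∑ p : Fin n × Fin n, if (p.1 < p.2 ∧ σ = pairInd p.1 p.2) then 2 * A p.1 p.2 else 0

lemma chi_pairInd {n : ℕ} (i j : Fin n) (hij : i ≠ j) (x : Fin n → Bool) :
    ∏ l, (if pairInd i j l then signVec x l else 1) = signVec x i * signVec x j := by
  have h1 : ∀ l, (if pairInd i j l then signVec x l else 1)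
      = (if l ∈ ({i, j} : Finset (Fin n)) then signVec x l else 1) := by
    intro l
    simp [pairInd, Finset.mem_insert, Finset.mem_singleton]
  simp only [h1]
  rw [Finset.prod_ite_mem, Finset.univ_inter, Finset.prod_pair hij]

lemma pairInd_inj {n : ℕ} {i j k l : Fin n} (h1 : i < j) (h2 : k < l)
    (h : pairInd i j = pairInd k l) : i = k ∧ j = l := by
  have hi : i = k ∨ i = l := by have := congrFun h i; simp [pairInd] at this; tauto
  have hj : j = k ∨ j = l := by have := congrFun h j; simp [pairInd] at this; tauto
  have hk : k = i ∨ k = j := by have := congrFun h k; simp [pairInd] at this; tauto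
  have hl : l = i ∨ l = j := by have := congrFun h l; simp [pairInd] at this; tauto
  have Hi := hi.imp (congrArg Fin.val) (congrArg Fin.val)
  have Hj := hj.imp (congrArg Fin.val) (congrArg Fin.val)
  have Hk := hk.imp (congrArg Fin.val) (congrArg Fin.val)
  have Hl := hl.imp (congrArg Fin.val) (congrArg Fin.val)
  have hv1 : i.val < j.val := h1
  have hv2 : k.val < l.val := h2
  have : i.val = k.val ∧ j.val = l.val := by omega
  exact ⟨Fin.ext this.1, Fin.ext this.2⟩

lemma PF_qc {n : ℕ} (A : Matrix (Fin n) (Fin n) ℝ) (x : Fin n → Bool) :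
    PF (qc A) x = ∑ p : Fin n × Fin n,
      (if p.1 < p.2 then 2 * A p.1 p.2 * signVec x p.1 * signVec x p.2 else 0) := by
  unfold PF qc
  simp only [Finset.sum_mul, ite_mul, zero_mul]
  rw [Finset.sum_comm]
  apply Finset.sum_congr rfl
  intro p _
  by_cases hp : p.1 < p.2
  · simp only [hp, true_and, if_pos]
    rw [Finset.sum_ite_eq' Finset.univ (pairInd p.1 p.2)
      (fun σ => 2 * A p.1 p.2 * ∏ l, (if σ l then signVec x l else 1))]
    rw [if_pos (Finset.mem_univ _), chi_pairInd p.1 p.2 (ne_of_lt hp) x]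
    ring
  · simp [hp]

lemma repr_lemma {n : ℕ} (A : Matrix (Fin n) (Fin n) ℝ) (hA : A.IsSymm) (x : Fin n → Bool) :
    dotProduct (signVec x) (A.mulVec (signVec x)) = A.trace + PF (qc A) x := by
  set s : Fin n → ℝ := signVec x with hs
  have hss : ∀ i, s i * s i = 1 := by
    intro i; by_cases h : x i <;> simp [hs, signVec, h]
  have hsym : ∀ i j, A j i = A i j := fun i j => congrFun (congrFun hA i) j
  have lhs_eq : dotProduct s (A.mulVec s) = ∑ i, ∑ j, s i * (A i j * s j) := by
    simp [dotProduct, Matrix.mulVec, Finset.mul_sum]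
  rw [lhs_eq]
  have split : ∀ i j : Fin n, s i * (A i j * s j)
      = (if i = j then A i j else 0)
        + ((if i < j then A i j * s i * s j else 0) + (if j < i then A i j * s i * s j else 0)) := by
    intro i j
    rcases lt_trichotomy i j with h | h | h
    · rw [if_neg (ne_of_lt h), if_pos h, if_neg (asymm h)]; ring
    · subst h
      rw [if_pos rfl, if_neg (lt_irrefl i)]
      calc s i * (A i i * s i) = A i i * (s i * s i) := by ring
        _ = A i i + (0 + 0) := by rw [hss i]; ring
    · rw [if_neg (ne_of_gt h), if_neg (asymm h), if_pos h]; ring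
  have e1 : ∑ i, ∑ j, (s i * (A i j * s j))
      = (∑ i, ∑ j, (if i = j then A i j else 0))
        + (∑ i, ∑ j, ((if i < j then A i j * s i * s j else 0)
            + (if j < i then A i j * s i * s j else 0))) := by
    rw [← Finset.sum_add_distrib]
    apply Finset.sum_congr rfl; intro i _
    rw [← Finset.sum_add_distrib]
    apply Finset.sum_congr rfl; intro j _
    exact split i j
  have T1 : ∑ i, ∑ j, (if i = j then A i j else 0) = A.trace := by
    rw [Matrix.trace]
    apply Finset.sum_congr rfl
    intro i _
    rw [Finset.sum_ite_eq Finset.univ i (fun j => A i j), if_pos (Finset.mem_univ i)]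
    rfl
  have hswap : ∑ i, ∑ j, (if j < i then A i j * s i * s j else 0)
      = ∑ i, ∑ j, (if i < j then A i j * s i * s j else 0) := by
    rw [Finset.sum_comm]
    apply Finset.sum_congr rfl; intro j _
    apply Finset.sum_congr rfl; intro i _
    by_cases h : j < i
    · rw [if_pos h, if_pos h, hsym j i]; ring
    · rw [if_neg h, if_neg h]
  have T2 : ∑ i, ∑ j, ((if i < j then A i j * s i * s j else 0)
      + (if j < i then A i j * s i * s j else 0)) = PF (qc A) x := by
    rw [PF_qc, Fintype.sum_prod_type]
    simp only [Finset.sum_add_distrib]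
    rw [hswap, ← two_mul, Finset.mul_sum]
    apply Finset.sum_congr rfl; intro i _
    rw [Finset.mul_sum]
    apply Finset.sum_congr rfl; intro j _
    rw [mul_ite, mul_zero]
    split_ifs with h
    · ring
    · rfl
  rw [e1, T1, T2]

lemma qc_deg {n : ℕ} (A : Matrix (Fin n) (Fin n) ℝ) :
    ∀ σ, qc A σ ≠ 0 → degB σ ≤ 2 := by
  intro σ hσ
  have hex : ∃ p : Fin n × Fin n, p.1 < p.2 ∧ σ = pairInd p.1 p.2 := by
    by_contra hne
    push_neg at hne
    apply hσ
    apply Finset.sum_eq_zero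
    intro p _
    rw [if_neg]
    intro hc
    exact hne p hc.1 hc.2
  obtain ⟨⟨i, j⟩, hij, rfl⟩ := hex
  unfold degB
  calc ∑ l, (if pairInd i j l then 1 else 0)
      ≤ ∑ l, ((if l = i then 1 else 0) + (if l = j then 1 else 0)) := by
        apply Finset.sum_le_sum
        intro l _
        by_cases h1 : l = i <;> by_cases h2 : l = j <;> simp [pairInd, h1, h2]
    _ = 2 := by
        rw [Finset.sum_add_distrib, Finset.sum_ite_eq' Finset.univ i (fun _ => 1),
          Finset.sum_ite_eq' Finset.univ j (fun _ => 1)]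
        simp

lemma qc_sq {n : ℕ} (A : Matrix (Fin n) (Fin n) ℝ) :
    ∑ σ : Fin n → Bool, (qc A σ)^2 ≤ 4 * ∑ i, ∑ j, (A i j)^2 := by
  have hnn : ∀ (σ : Fin n → Bool) (p : Fin n × Fin n),
      (0:ℝ) ≤ (if (p.1 < p.2 ∧ σ = pairInd p.1 p.2) then (2 * A p.1 p.2)^2 else 0) := by
    intro σ p
    split_ifs
    · exact sq_nonneg _
    · exact le_refl 0
  have key : ∀ σ, (qc A σ)^2 ≤ ∑ p : Fin n × Fin n,
      (if (p.1 < p.2 ∧ σ = pairInd p.1 p.2) then (2 * A p.1 p.2)^2 else 0) := by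
    intro σ
    by_cases hex : ∃ p : Fin n × Fin n, p.1 < p.2 ∧ σ = pairInd p.1 p.2
    · obtain ⟨p0, hp0⟩ := hex
      have hval : qc A σ = 2 * A p0.1 p0.2 := by
        unfold qc
        rw [Finset.sum_eq_single p0]
        · rw [if_pos hp0]
        · intro p _ hne
          rw [if_neg]
          intro hc
          have hinj := pairInd_inj hc.1 hp0.1 (hc.2.symm.trans hp0.2)
          exact hne (Prod.ext hinj.1 hinj.2)
        · intro h; exact absurd (Finset.mem_univ p0) h
      rw [hval]
      have h2 : ((2 * A p0.1 p0.2)^2 : ℝ)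
          = (if (p0.1 < p0.2 ∧ σ = pairInd p0.1 p0.2) then (2 * A p0.1 p0.2)^2 else 0) := by
        rw [if_pos hp0]
      rw [h2]
      exact Finset.single_le_sum (fun p _ => hnn σ p) (Finset.mem_univ p0)
    · have hz : qc A σ = 0 := by
        apply Finset.sum_eq_zero
        intro p _
        rw [if_neg (fun hc => hex ⟨p, hc⟩)]
      rw [hz]
      simpa using Finset.sum_nonneg (fun p _ => hnn σ p)
  calc ∑ σ : Fin n → Bool, (qc A σ)^2
      ≤ ∑ σ : Fin n → Bool, ∑ p : Fin n × Fin n,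
          (if (p.1 < p.2 ∧ σ = pairInd p.1 p.2) then (2 * A p.1 p.2)^2 else 0) :=
        Finset.sum_le_sum (fun σ _ => key σ)
    _ = ∑ p : Fin n × Fin n, ∑ σ : Fin n → Bool,
          (if (p.1 < p.2 ∧ σ = pairInd p.1 p.2) then (2 * A p.1 p.2)^2 else 0) :=
        Finset.sum_comm
    _ ≤ ∑ p : Fin n × Fin n, (2 * A p.1 p.2)^2 := by
        apply Finset.sum_le_sum
        intro p _
        by_cases hp : p.1 < p.2
        · simp only [hp, true_and]
          rw [Finset.sum_ite_eq' Finset.univ (pairInd p.1 p.2) (fun _ => (2 * A p.1 p.2)^2),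
            if_pos (Finset.mem_univ _)]
        · have : ∀ σ ∈ (Finset.univ : Finset (Fin n → Bool)),
              (if (p.1 < p.2 ∧ σ = pairInd p.1 p.2) then (2 * A p.1 p.2)^2 else 0) = 0 := by
            intro σ _
            rw [if_neg (fun hc => hp hc.1)]
          rw [Finset.sum_eq_zero this]
          exact sq_nonneg _
    _ = 4 * ∑ i, ∑ j, (A i j)^2 := by
        rw [Fintype.sum_prod_type, Finset.mul_sum]
        apply Finset.sum_congr rfl; intro i _
        rw [Finset.mul_sum]
        apply Finset.sum_congr rfl; intro j _
        ring
set_option maxHeartbeats 2000000 in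
/-- A moment bound for quadratic forms over the hypercube (Lemma `boundmoment`). -/
theorem moment_bound_quadratic_forms :
    ∃ C : ℝ, 0 < C ∧
      ∀ (n : ℕ) (A : Matrix (Fin n) (Fin n) ℝ), A.IsSymm →
      ∀ k : ℕ, 2 ≤ k →
        expUnif n (fun x => |dotProduct x (A.mulVec x)| ^ k)
          ≤ C ^ k * max (frobNorm A * k) |A.trace| ^ k := by
  refine ⟨5, by norm_num, ?_⟩
  intro n A hA k hk
  have hk1 : 1 ≤ k := by omega
  set F : ℝ := frobNorm A with hFdef
  set t : ℝ := A.trace with htdef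
  set M : ℝ := max (F * k) |t| with hMdef
  set c : (Fin n → Bool) → ℝ := qc A with hcdef
  set N : ℝ := (2:ℝ)^n with hNdef
  have hNpos : (0:ℝ) < N := by positivity
  have hFnn : 0 ≤ F := Real.sqrt_nonneg _
  have hMnn : 0 ≤ M := le_trans (abs_nonneg t) (le_max_right _ _)
  have hF2 : F^2 = ∑ i, ∑ j, (A i j)^2 := by
    rw [hFdef]
    unfold frobNorm
    exact Real.sq_sqrt (Finset.sum_nonneg fun i _ => Finset.sum_nonneg fun j _ => sq_nonneg _)
  have hS : ∑ σ : Fin n → Bool, (c σ)^2 ≤ 4 * F^2 := by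
    rw [hF2]; exact qc_sq A
  have hSnn : (0:ℝ) ≤ ∑ σ : Fin n → Bool, (c σ)^2 :=
    Finset.sum_nonneg fun σ _ => sq_nonneg _
  set β : ℝ := 4 * k * F with hβdef
  have hβnn : 0 ≤ β := by positivity
  -- hypercontractivity bound on PF c
  have Hy := hyper k hk1 n 2 c (qc_deg A)
  have hkR : (1:ℝ) ≤ (k:ℝ) := by exact_mod_cast hk1
  have hcoef : ((2*(k:ℝ)-1)^2 * ∑ σ : Fin n → Bool, (c σ)^2) ≤ β^2 := by
    have h1 : (2*(k:ℝ)-1)^2 ≤ (2*(k:ℝ))^2 := by nlinarith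
    have h2 : (0:ℝ) ≤ (2*(k:ℝ)-1)^2 := sq_nonneg _
    calc (2*(k:ℝ)-1)^2 * ∑ σ : Fin n → Bool, (c σ)^2
        ≤ (2*(k:ℝ))^2 * (4 * F^2) := by
          apply mul_le_mul h1 hS hSnn (by positivity)
      _ = (4 * k * F)^2 := by ring
  have HyB : ∑ x : Fin n → Bool, (PF c x)^(2*k) ≤ N * β^(2*k) := by
    calc ∑ x : Fin n → Bool, (PF c x)^(2*k)
        ≤ 2^n * ((2*(k:ℝ)-1)^2 * ∑ σ : Fin n → Bool, (c σ)^2)^k := Hy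
      _ ≤ 2^n * (β^2)^k := by
          apply mul_le_mul_of_nonneg_left _ (by positivity)
          apply pow_le_pow_left₀ _ hcoef
          positivity
      _ = N * β^(2*k) := by rw [← pow_mul, hNdef]
  -- Minkowski: constant + PF
  have hcard : (Fintype.card (Fin n → Bool) : ℝ) = N := by
    rw [hNdef]
    simp [Fintype.card_fun]
  have h2k : Even (2*k) := ⟨k, by ring⟩
  have hsum_t : ∑ _x : Fin n → Bool, |t|^(2*k) = N * |t|^(2*k) := by
    rw [Finset.sum_const, Finset.card_univ, nsmul_eq_mul, hcard]
  have hsum_P : ∑ x : Fin n → Bool, |PF c x|^(2*k) ≤ N * β^(2*k) := by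
    have : ∀ x : Fin n → Bool, |PF c x|^(2*k) = (PF c x)^(2*k) := fun x => h2k.pow_abs _
    simp only [this]
    exact HyB
  have hmk := minkW (ι := Fin n → Bool) (fun _ => |t|) (fun x => |PF c x|)
    (fun _ => abs_nonneg t) (fun x => abs_nonneg _) (2*k) (by omega)
    (W := N) (α := |t|) (β := β) hNpos.le (abs_nonneg t) hβnn
    (le_of_eq hsum_t) hsum_P
  -- sum of f^{2k}
  set f : (Fin n → Bool) → ℝ :=
    fun x => dotProduct (signVec x) (A.mulVec (signVec x)) with hfdef
  have hfx : ∀ x, f x = t + PF c x := fun x => repr_lemma A hA x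
  have hf2k : ∑ x : Fin n → Bool, (f x)^(2*k) ≤ N * (|t| + β)^(2*k) := by
    calc ∑ x : Fin n → Bool, (f x)^(2*k)
        ≤ ∑ x : Fin n → Bool, (|t| + |PF c x|)^(2*k) := by
          apply Finset.sum_le_sum
          intro x _
          rw [hfx x, ← h2k.pow_abs (t + PF c x)]
          exact pow_le_pow_left₀ (abs_nonneg _) (abs_add_le t (PF c x)) (2*k)
      _ ≤ N * (|t| + β)^(2*k) := hmk
  -- Cauchy-Schwarz
  have hCS : (∑ x : Fin n → Bool, |f x|^k)^2 ≤ N * ∑ x : Fin n → Bool, (f x)^(2*k) := by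
    have h := Finset.sum_mul_sq_le_sq_mul_sq Finset.univ
      (fun x : Fin n → Bool => (1:ℝ)) (fun x => |f x|^k)
    simp only [one_mul, one_pow] at h
    calc (∑ x : Fin n → Bool, |f x|^k)^2
        ≤ (∑ _x : Fin n → Bool, (1:ℝ)) * ∑ x : Fin n → Bool, (|f x|^k)^2 := h
      _ = N * ∑ x : Fin n → Bool, (f x)^(2*k) := by
          congr 1
          · rw [Finset.sum_const, nsmul_eq_mul, mul_one]; simpa using hcard
          · apply Finset.sum_congr rfl
            intro x _
            rw [← pow_mul, mul_comm k 2, h2k.pow_abs]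
  -- combine
  have hfinal : ∑ x : Fin n → Bool, |f x|^k ≤ N * (|t| + β)^k := by
    have hb : (0:ℝ) ≤ N * (|t| + β)^k := by positivity
    have ha : (0:ℝ) ≤ ∑ x : Fin n → Bool, |f x|^k :=
      Finset.sum_nonneg fun x _ => pow_nonneg (abs_nonneg _) k
    have hsq : (∑ x : Fin n → Bool, |f x|^k)^2 ≤ (N * (|t| + β)^k)^2 := by
      calc (∑ x : Fin n → Bool, |f x|^k)^2
          ≤ N * ∑ x : Fin n → Bool, (f x)^(2*k) := hCS
        _ ≤ N * (N * (|t| + β)^(2*k)) := by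
            exact mul_le_mul_of_nonneg_left hf2k hNpos.le
        _ = (N * (|t| + β)^k)^2 := by
            rw [show 2*k = k*2 by ring, pow_mul]
            ring
    nlinarith [hsq, ha, hb]
  -- conclude
  have hβM : |t| + β ≤ 5 * M := by
    have h1 : |t| ≤ M := le_max_right _ _
    have h2 : β ≤ 4 * M := by
      have : F * k ≤ M := le_max_left _ _
      rw [hβdef]
      nlinarith
    linarith
  unfold expUnif
  rw [div_le_iff₀ hNpos]
  calc ∑ x : Fin n → Bool, |dotProduct (signVec x) (A.mulVec (signVec x))|^k
      = ∑ x : Fin n → Bool, |f x|^k := rfl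
    _ ≤ N * (|t| + β)^k := hfinal
    _ ≤ N * (5*M)^k := by
        apply mul_le_mul_of_nonneg_left _ hNpos.le
        exact pow_le_pow_left₀ (by positivity) hβM k
    _ = 5^k * M^k * N := by rw [mul_pow]; ring
end
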